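/- arXiv:1911.06642 — 5 statements merged into one kernel-verified Lean document; each statement's English description precedes it below -/
import Mathlib

section
/- For every integer k ≥ 2 there exists a constant C such that for all n, every simple graph G on n vertices that admits a proper edge-coloring with no rainbow copy of the cycle C_{2k+1} contains at most C·n^{2k−1} copies of C_{2k+1}. (Upper bound of Theorem 1.2 for odd cycles: ex(n, C_{2k+1}, rainbow-C_{2k+1}) = O(n^{2k−1}).) -/
open SimpleGraph

/-- A proper edge-coloring: distinct edges of `G` sharing a vertex get different colors. -/
def IsProperEdgeColoring {V β : Type*} (G : SimpleGraph V) (c : Sym2 V → β) : Prop :=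
  ∀ e₁ ∈ G.edgeSet, ∀ e₂ ∈ G.edgeSet, e₁ ≠ e₂ → (∃ v, v ∈ e₁ ∧ v ∈ e₂) → c e₁ ≠ c e₂

/-- `G`, with edge-coloring `c`, contains a rainbow copy of `H`:
a subgraph isomorphic to `H` all of whose edges get pairwise distinct colors. -/
def HasRainbowCopy {V W β : Type*} (G : SimpleGraph V) (c : Sym2 V → β)
    (H : SimpleGraph W) : Prop :=
  ∃ A : G.Subgraph, Nonempty (A.coe ≃g H) ∧ Set.InjOn c A.edgeSet

/-- The number of copies of `H` in `G`, i.e. the number of subgraphs of `G`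
isomorphic to `H`. -/
noncomputable def copyCount {V W : Type*} (G : SimpleGraph V) (H : SimpleGraph W) : ℕ :=
  Set.ncard {A : G.Subgraph | Nonempty (A.coe ≃g H)}

namespace ORC

open scoped Classical
open scoped Fin.NatCast Fin.CommRing

variable {n m : ℕ} {β : Type*} {G : SimpleGraph (Fin n)} {σ : Fin (m+5) → Fin n}
  {c : Sym2 (Fin n) → β}

/-- The `i`-th edge of a cyclic vertex sequence. -/
def cE (σ : Fin (m+5) → Fin n) (i : Fin (m+5)) : Sym2 (Fin n) := s(σ i, σ (i+1))

/-- `σ` is (the vertex sequence of) a cycle of length `m+5` in `G`. -/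
def IsCyc (G : SimpleGraph (Fin n)) (σ : Fin (m+5) → Fin n) : Prop :=
  Function.Injective σ ∧ ∀ i, G.Adj (σ i) (σ (i+1))

/-! ### Fin arithmetic helpers -/

lemma fin_add_ne (x : Fin (m+5)) {a : ℕ} (ha1 : 1 ≤ a) (ha2 : a ≤ 4) : x + a ≠ x := by
  intro h
  have h2 : ((a : Fin (m+5))) = 0 := left_eq_add.mp h.symm
  have h3 : (((a : ℕ) : Fin (m+5)) : ℕ) = a % (m+5) := Fin.val_natCast a (m+5)
  rw [h2] at h3
  simp only [Fin.val_zero] at h3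
  have : a % (m+5) = a := Nat.mod_eq_of_lt (by omega)
  omega

lemma fin1 (x : Fin (m+5)) : x + 1 ≠ x := by
  simpa using fin_add_ne (m := m) x (a := 1) le_rfl (by norm_num)

lemma fin2 (x : Fin (m+5)) : x + 2 ≠ x := by
  simpa using fin_add_ne (m := m) x (a := 2) (by norm_num) (by norm_num)

lemma fin4 (x : Fin (m+5)) : x + 4 ≠ x := by
  simpa using fin_add_ne (m := m) x (a := 4) (by norm_num) (by norm_num)

lemma sub_one_eq_iff {x y : Fin (m+5)} : x - 1 = y ↔ x = y + 1 := sub_eq_iff_eq_add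

lemma sub_one_ne_iff {x y : Fin (m+5)} : x - 1 ≠ y ↔ x ≠ y + 1 := not_congr sub_one_eq_iff

lemma sub_add_one (x : Fin (m+5)) : x - 1 + 1 = x := by ring

lemma succ_ne_succ {x y : Fin (m+5)} (h : x ≠ y) : x + 1 ≠ y + 1 :=
  fun h2 => h (add_right_cancel h2)

/-! ### proper coloring helpers -/

lemma partner_unique (hc : IsProperEdgeColoring G c) {a b b' : Fin n}
    (h1 : G.Adj a b) (h2 : G.Adj a b') (h : c s(a,b) = c s(a,b')) : b = b' := by
  by_contra hne
  refine hc _ (G.mem_edgeSet.mpr h1) _ (G.mem_edgeSet.mpr h2) ?_ ⟨a, by simp, by simp⟩ h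
  intro he
  rw [Sym2.eq_iff] at he
  rcases he with ⟨-, h3⟩ | ⟨h3, -⟩
  · exact hne h3
  · exact h2.ne' h3.symm

lemma proper_ne (hc : IsProperEdgeColoring G c) {a b b' : Fin n}
    (h1 : G.Adj a b) (h2 : G.Adj a b') (hne : b ≠ b') : c s(a,b) ≠ c s(a,b') :=
  fun h => hne (partner_unique hc h1 h2 h)

/-! ### cycle edge helpers -/

lemma cE_mem (h : IsCyc G σ) (i : Fin (m+5)) : cE σ i ∈ G.edgeSet :=
  G.mem_edgeSet.mpr (h.2 i)

lemma cE_inj (h : Function.Injective σ) {i j : Fin (m+5)} (he : cE σ i = cE σ j) : i = j := by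
  rw [cE, cE, Sym2.eq_iff] at he
  rcases he with ⟨h1, -⟩ | ⟨h1, h2⟩
  · exact h h1
  · exfalso
    have e1 : i = j + 1 := h h1
    have e2 : i + 1 = j := h h2
    apply fin2 (m := m) j
    rw [show j + 2 = j + 1 + 1 by ring, ← e1, e2]

/-- Two same-colored distinct edges of a cycle are non-adjacent on the cycle. -/
lemma rep_indep (hc : IsProperEdgeColoring G c) (h : IsCyc G σ) {i j : Fin (m+5)}
    (hne : i ≠ j) (hcol : c (cE σ i) = c (cE σ j)) : j ≠ i + 1 := by
  intro hj
  subst hj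
  have h1 : G.Adj (σ (i+1)) (σ i) := (h.2 i).symm
  have h2 : G.Adj (σ (i+1)) (σ (i+1+1)) := h.2 (i+1)
  have hcc : c s(σ (i+1), σ i) = c s(σ (i+1), σ (i+1+1)) := by
    rw [show s(σ (i+1), σ i) = cE σ i from Sym2.eq_swap, hcol]; rfl
  have h3 := partner_unique hc h1 h2 hcc
  have h4 : i = i + 1 + 1 := h.1 h3
  apply fin2 (m := m) i
  rw [show i + 2 = i + 1 + 1 by ring, ← h4]

/-! ### the cycle subgraph of a cyclic sequence -/

lemma cyc_adj_succ (u : Fin (m+5)) : (cycleGraph (m+5)).Adj u (u+1) := by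
  apply (cycleGraph_adj (n := m+3)).2
  right; ring

lemma cyc_adj_cases {u v : Fin (m+5)} (h : (cycleGraph (m+5)).Adj u v) :
    v = u + 1 ∨ u = v + 1 := by
  rcases (cycleGraph_adj (n := m+3)).1 h with h' | h'
  · right; rw [← h']; ring
  · left; rw [← h']; ring

/-- The cycle subgraph associated to a cyclic sequence. -/
def cycSub (h : IsCyc G σ) : G.Subgraph where
  verts := Set.range σ
  Adj x y := ∃ i : Fin (m+5), s(x,y) = cE σ i
  adj_sub := by
    rintro x y ⟨i, hi⟩
    rw [cE, Sym2.eq_iff] at hi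
    rcases hi with ⟨h1, h2⟩ | ⟨h1, h2⟩
    · rw [h1, h2]; exact h.2 i
    · rw [h1, h2]; exact (h.2 i).symm
  edge_vert := by
    rintro x y ⟨i, hi⟩
    rw [cE, Sym2.eq_iff] at hi
    rcases hi with ⟨h1, -⟩ | ⟨h1, -⟩
    · exact h1 ▸ Set.mem_range_self _
    · exact h1 ▸ Set.mem_range_self _
  symm := by
    constructor
    rintro x y ⟨i, hi⟩
    exact ⟨i, by rw [Sym2.eq_swap]; exact hi⟩

lemma cycSub_edge (h : IsCyc G σ) : (cycSub h).edgeSet ⊆ Set.range (cE σ) := by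
  intro e he
  induction e with
  | _ x y =>
    obtain ⟨i, hi⟩ := (Subgraph.mem_edgeSet).1 he
    exact ⟨i, hi.symm⟩

noncomputable def cycIso (h : IsCyc G σ) : cycleGraph (m+5) ≃g (cycSub h).coe where
  toEquiv := Equiv.ofInjective σ h.1
  map_rel_iff' := by
    intro p q
    simp only [Subgraph.coe_adj]
    constructor
    · rintro ⟨i, hi⟩
      rw [cE, Sym2.eq_iff] at hi
      rcases hi with ⟨h1, h2⟩ | ⟨h1, h2⟩
      · have e1 : p = i := h.1 h1
        have e2 : q = i + 1 := h.1 h2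
        rw [e1, e2]; exact cyc_adj_succ i
      · have e1 : p = i + 1 := h.1 h1
        have e2 : q = i := h.1 h2
        rw [e1, e2]; exact (cyc_adj_succ i).symm
    · intro hpq
      rcases cyc_adj_cases hpq with h' | h'
      · subst h'
        exact ⟨p, rfl⟩
      · subst h'
        exact ⟨q, Sym2.eq_swap⟩

/-- If some cycle has all edge colors distinct, there is a rainbow copy. -/
lemma rainbow_of (h : IsCyc G σ) (hr : ∀ i j, c (cE σ i) = c (cE σ j) → i = j) :
    HasRainbowCopy G c (cycleGraph (m+5)) := by
  refine ⟨cycSub h, ⟨(cycIso h).symm⟩, ?_⟩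
  intro e₁ h₁ e₂ h₂ hcc
  obtain ⟨i, hi⟩ := cycSub_edge h h₁
  obtain ⟨j, hj⟩ := cycSub_edge h h₂
  rw [← hi, ← hj] at hcc ⊢
  rw [hr i j hcc]

/-- In absence of a rainbow copy, every cycle has two distinct same-colored edges. -/
lemma exists_repeat (hnr : ¬ HasRainbowCopy G c (cycleGraph (m+5))) (h : IsCyc G σ) :
    ∃ i j, i ≠ j ∧ c (cE σ i) = c (cE σ j) := by
  by_contra hcon
  push_neg at hcon
  exact hnr (rainbow_of h (fun i j hij => by
    by_contra hne
    exact (hcon i j hne) hij))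

/-- The cyclic sequence attached to a subgraph isomorphic to the cycle. -/
noncomputable def subToCyc (A : G.Subgraph) (e : A.coe ≃g cycleGraph (m+5)) :
    Fin (m+5) → Fin n := fun i => ((e.symm i : A.verts) : Fin n)

lemma subToCyc_isCyc (A : G.Subgraph) (e : A.coe ≃g cycleGraph (m+5)) :
    IsCyc G (subToCyc A e) := by
  constructor
  · intro a b hab
    have : e.symm a = e.symm b := Subtype.ext hab
    simpa using congrArg e this
  · intro i
    have hadj : A.coe.Adj (e.symm i) (e.symm (i+1)) := by
      exact (e.symm.map_rel_iff).2 (by simpa using cyc_adj_succ i)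
    exact A.adj_sub hadj

lemma subToCyc_verts (A : G.Subgraph) (e : A.coe ≃g cycleGraph (m+5)) :
    A.verts = Set.range (subToCyc A e) := by
  ext x
  constructor
  · intro hx
    exact ⟨e ⟨x, hx⟩, by simp [subToCyc]⟩
  · rintro ⟨i, rfl⟩
    exact (e.symm i).2

lemma subToCyc_adj (A : G.Subgraph) (e : A.coe ≃g cycleGraph (m+5)) (x y : Fin n) :
    A.Adj x y ↔ ∃ i, s(x,y) = cE (subToCyc A e) i := by
  constructor
  · intro hA
    have hx := hA.fst_mem
    have hy := hA.snd_mem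
    have hco : A.coe.Adj ⟨x, hx⟩ ⟨y, hy⟩ := hA
    have hcyc : (cycleGraph (m+5)).Adj (e ⟨x, hx⟩) (e ⟨y, hy⟩) := e.map_rel_iff'.2 hco
    have hx' : subToCyc A e (e ⟨x, hx⟩) = x := by simp [subToCyc]
    have hy' : subToCyc A e (e ⟨y, hy⟩) = y := by simp [subToCyc]
    rcases cyc_adj_cases hcyc with h' | h'
    · exact ⟨e ⟨x, hx⟩, by rw [cE, ← h', hx', hy']⟩
    · exact ⟨e ⟨y, hy⟩, by rw [cE, ← h', hx', hy', Sym2.eq_swap]⟩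
  · rintro ⟨i, hi⟩
    have hadj : A.Adj (subToCyc A e i) (subToCyc A e (i+1)) := by
      have : A.coe.Adj (e.symm i) (e.symm (i+1)) :=
        (e.symm.map_rel_iff).2 (by simpa using cyc_adj_succ i)
      exact this
    rw [cE, Sym2.eq_iff] at hi
    rcases hi with ⟨h1, h2⟩ | ⟨h1, h2⟩
    · rw [h1, h2]; exact hadj
    · rw [h1, h2]; exact hadj.symm

lemma copyCount_le_ncard (G : SimpleGraph (Fin n)) :
    _root_.copyCount G (cycleGraph (m+5)) ≤ {σ : Fin (m+5) → Fin n | IsCyc G σ}.ncard := by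
  classical
  rcases Set.eq_empty_or_nonempty
    {A : G.Subgraph | Nonempty (A.coe ≃g cycleGraph (m+5))} with hS | hS
  · rw [_root_.copyCount, hS, Set.ncard_empty]; exact Nat.zero_le _
  · obtain ⟨A₀, hA₀⟩ := hS
    have hv0 : Fin n := ((Classical.choice hA₀).symm 0 : A₀.verts)
    refine Set.ncard_le_ncard_of_injOn
      (fun A => if h : Nonempty (A.coe ≃g cycleGraph (m+5)) then
        subToCyc A (Classical.choice h) else fun _ => hv0) ?_ ?_ (Set.toFinite _)
    · intro A hA
      simp only [Set.mem_setOf_eq] at hA ⊢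
      rw [dif_pos hA]
      exact subToCyc_isCyc A _
    · intro A hA A' hA' hff
      simp only [Set.mem_setOf_eq] at hA hA'
      simp only [dif_pos hA, dif_pos hA'] at hff
      apply Subgraph.ext
      · rw [subToCyc_verts A (Classical.choice hA),
          subToCyc_verts A' (Classical.choice hA'), hff]
      · funext x y
        rw [eq_iff_iff, subToCyc_adj A (Classical.choice hA) x y,
          subToCyc_adj A' (Classical.choice hA') x y, hff]


/-- A cycle with two repeated color pairs is determined by its vertices away from
positions `j+1` and `b+1`. -/
lemma multi_inj (hc : IsProperEdgeColoring G c) {i j a b : Fin (m+5)}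
    (hij1 : i ≠ j) (hij2 : i ≠ j + 1)
    (haD : a ≠ i - 1 ∧ a ≠ i ∧ a ≠ j ∧ a ≠ j + 1)
    (hbD : b ≠ i - 1 ∧ b ≠ i ∧ b ≠ j ∧ b ≠ j + 1)
    (hab : a ≠ b)
    {σ σ' : Fin (m+5) → Fin n}
    (hσ : IsCyc G σ) (hσ' : IsCyc G σ')
    (hcol : c (cE σ i) = c (cE σ j)) (hcol' : c (cE σ' i) = c (cE σ' j))
    (hcol2 : c (cE σ a) = c (cE σ b)) (hcol2' : c (cE σ' a) = c (cE σ' b))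
    (hagree : ∀ x, x ≠ j + 1 → x ≠ b + 1 → σ x = σ' x) : σ = σ' := by
  have hab1 : a ≠ b + 1 := rep_indep hc hσ hab.symm hcol2.symm
  -- Step 1 : recover position b+1
  have hea : cE σ a = cE σ' a := by
    rw [cE, cE, hagree a haD.2.2.2 hab1,
      hagree (a+1) (succ_ne_succ (m := m) haD.2.2.1) (succ_ne_succ (m := m) hab)]
  have hbb : σ b = σ' b := hagree b hbD.2.2.2 (Ne.symm (fin1 b))
  have hstep1 : σ (b+1) = σ' (b+1) := by
    refine partner_unique hc (hσ.2 b) (hbb ▸ hσ'.2 b) ?_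
    have e1 : c s(σ b, σ (b+1)) = c (cE σ' b) := by
      rw [show s(σ b, σ (b+1)) = cE σ b from rfl, ← hcol2, hea, hcol2']
    rw [e1, cE, hbb]
  have hagree2 : ∀ x, x ≠ j + 1 → σ x = σ' x := by
    intro x hx
    by_cases hxb : x = b + 1
    · rw [hxb]; exact hstep1
    · exact hagree x hx hxb
  -- Step 2 : recover position j+1
  have hei : cE σ i = cE σ' i := by
    rw [cE, cE, hagree2 i hij2, hagree2 (i+1) (succ_ne_succ (m := m) hij1)]
  have hjj : σ j = σ' j := hagree2 j (Ne.symm (fin1 j))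
  have hstep2 : σ (j+1) = σ' (j+1) := by
    refine partner_unique hc (hσ.2 j) (hjj ▸ hσ'.2 j) ?_
    have e1 : c s(σ j, σ (j+1)) = c (cE σ' j) := by
      rw [show s(σ j, σ (j+1)) = cE σ j from rfl, ← hcol, hei, hcol']
    rw [e1, cE, hjj]
  funext x
  by_cases hx : x = j + 1
  · rw [hx]; exact hstep2
  · exact hagree2 x hx


set_option maxHeartbeats 1000000 in
/-- Key extremal lemma: at most `4m+20` cycles share a given rainbow frame. -/
lemma fiber_bound (hc : IsProperEdgeColoring G c)
    (hnr : ¬ HasRainbowCopy G c (cycleGraph (m+5)))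
    {i j : Fin (m+5)} (hij1 : i ≠ j) (hij2 : i ≠ j + 1) (hij4 : i ≠ j + 1 + 1)
    (T : Finset (Fin (m+5) → Fin n))
    (hT : ∀ σ ∈ T, IsCyc G σ ∧ c (cE σ i) = c (cE σ j) ∧
      ∀ x y : Fin (m+5), (x ≠ i - 1 ∧ x ≠ i ∧ x ≠ j ∧ x ≠ j + 1) →
        (y ≠ i - 1 ∧ y ≠ i ∧ y ≠ j ∧ y ≠ j + 1) → c (cE σ x) = c (cE σ y) → x = y)
    (hagree : ∀ σ ∈ T, ∀ σ' ∈ T, ∀ x : Fin (m+5), x ≠ i → x ≠ j + 1 → σ x = σ' x) :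
    T.card ≤ 4 * m + 20 := by
  classical
  by_contra hbig
  push_neg at hbig
  have hTne : T.Nonempty := Finset.card_pos.1 (by omega)
  obtain ⟨σ₀, hσ₀⟩ := hTne
  have p1 : i + 1 ≠ i := fin1 i
  have p2 : i + 1 ≠ j + 1 := succ_ne_succ hij1
  have p3 : i - 1 ≠ i := sub_one_ne_iff.mpr (Ne.symm (fin1 i))
  have p4 : i - 1 ≠ j + 1 := sub_one_ne_iff.mpr hij4
  have p5 : j ≠ i := hij1.symm
  have p6 : j ≠ j + 1 := Ne.symm (fin1 j)
  have p7 : j + 1 + 1 ≠ i := Ne.symm hij4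
  have p8 : j + 1 + 1 ≠ j + 1 := fin1 (j+1)
  have p9 : i - 1 ≠ j := sub_one_ne_iff.mpr hij2
  have hce : ∀ σ ∈ T, ∀ x, (x ≠ i - 1 ∧ x ≠ i ∧ x ≠ j ∧ x ≠ j + 1) → cE σ x = cE σ₀ x := by
    intro σ hσT x hx
    have hx1 : x + 1 ≠ i := fun h => hx.1 ((sub_one_eq_iff.mpr h.symm).symm)
    have hx2 : x + 1 ≠ j + 1 := succ_ne_succ hx.2.2.1
    rw [cE, cE, hagree σ hσT σ₀ hσ₀ x hx.2.1 hx.2.2.2, hagree σ hσT σ₀ hσ₀ (x+1) hx1 hx2]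
  have keyχ : ∀ σ ∈ T, ∀ σ' ∈ T, c (cE σ i) = c (cE σ' i) → σ = σ' := by
    intro σ hσT σ' hσ'T hχ
    obtain ⟨hσ, hσcol, -⟩ := hT σ hσT
    obtain ⟨hσ', hσ'col, -⟩ := hT σ' hσ'T
    have h1 : σ (i+1) = σ' (i+1) := hagree σ hσT σ' hσ'T (i+1) p1 p2
    have hjj : σ j = σ' j := hagree σ hσT σ' hσ'T j p5 p6
    have hw : σ (j+1) = σ' (j+1) := by
      refine partner_unique hc (hσ.2 j) (hjj ▸ hσ'.2 j) ?_
      have e1 : c s(σ j, σ (j+1)) = c (cE σ' j) := by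
        rw [show s(σ j, σ (j+1)) = cE σ j from rfl, ← hσcol, hχ, hσ'col]
      rw [e1, cE, hjj]
    have hu : σ i = σ' i := by
      refine partner_unique hc (hσ.2 i).symm (h1 ▸ (hσ'.2 i).symm) ?_
      have e1 : c s(σ (i+1), σ i) = c (cE σ' i) := by
        rw [show s(σ (i+1), σ i) = cE σ i from Sym2.eq_swap, hχ]
      rw [e1, show cE σ' i = s(σ' (i+1), σ' i) from Sym2.eq_swap.symm, h1]
    funext x
    by_cases hxi : x = i
    · rw [hxi]; exact hu
    · by_cases hxj : x = j + 1
      · rw [hxj]; exact hw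
      · exact hagree σ hσT σ' hσ'T x hxi hxj
  have keyu : ∀ σ ∈ T, ∀ σ' ∈ T, σ i = σ' i → σ = σ' := by
    intro σ hσT σ' hσ'T hu
    refine keyχ σ hσT σ' hσ'T ?_
    rw [cE, cE, hu, hagree σ hσT σ' hσ'T (i+1) p1 p2]
  have keyw : ∀ σ ∈ T, ∀ σ' ∈ T, σ (j+1) = σ' (j+1) → σ = σ' := by
    intro σ hσT σ' hσ'T hw
    obtain ⟨-, hσcol, -⟩ := hT σ hσT
    obtain ⟨-, hσ'col, -⟩ := hT σ' hσ'T
    refine keyχ σ hσT σ' hσ'T ?_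
    rw [hσcol, hσ'col, cE, cE, hw, hagree σ hσT σ' hσ'T j p5 p6]
  have keyα : ∀ σ ∈ T, ∀ σ' ∈ T, c (cE σ (i-1)) = c (cE σ' (i-1)) → σ = σ' := by
    intro σ hσT σ' hσ'T hα
    obtain ⟨hσ, -, -⟩ := hT σ hσT
    obtain ⟨hσ', -, -⟩ := hT σ' hσ'T
    have hcm : σ (i-1) = σ' (i-1) := hagree σ hσT σ' hσ'T (i-1) p3 p4
    have a1 : G.Adj (σ (i-1)) (σ i) := by
      have := hσ.2 (i-1); rwa [sub_add_one] at this
    have a2 : G.Adj (σ (i-1)) (σ' i) := by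
      have := hσ'.2 (i-1); rw [sub_add_one] at this; rwa [← hcm] at this
    refine keyu σ hσT σ' hσ'T (partner_unique hc a1 a2 ?_)
    have e1 : s(σ (i-1), σ i) = cE σ (i-1) := by rw [cE, sub_add_one]
    have e2 : s(σ (i-1), σ' i) = cE σ' (i-1) := by rw [cE, sub_add_one, hcm]
    rw [e1, e2, hα]
  have keyβ : ∀ σ ∈ T, ∀ σ' ∈ T, c (cE σ (j+1)) = c (cE σ' (j+1)) → σ = σ' := by
    intro σ hσT σ' hσ'T hβ
    obtain ⟨hσ, -, -⟩ := hT σ hσT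
    obtain ⟨hσ', -, -⟩ := hT σ' hσ'T
    have hcm : σ (j+1+1) = σ' (j+1+1) := hagree σ hσT σ' hσ'T (j+1+1) p7 p8
    have a1 : G.Adj (σ (j+1+1)) (σ (j+1)) := (hσ.2 (j+1)).symm
    have a2 : G.Adj (σ (j+1+1)) (σ' (j+1)) := hcm ▸ (hσ'.2 (j+1)).symm
    refine keyw σ hσT σ' hσ'T (partner_unique hc a1 a2 ?_)
    have e1 : s(σ (j+1+1), σ (j+1)) = cE σ (j+1) := Sym2.eq_swap
    have e2 : s(σ (j+1+1), σ' (j+1)) = cE σ' (j+1) := by rw [hcm]; exact Sym2.eq_swap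
    rw [e1, e2, hβ]
  -- frame colors
  set FC : Finset β :=
    (Finset.univ.filter
      (fun x : Fin (m+5) => x ≠ i - 1 ∧ x ≠ i ∧ x ≠ j ∧ x ≠ j + 1)).image
      (fun x => c (cE σ₀ x)) with hFCdef
  have hFCcard : FC.card ≤ m + 5 := by
    refine le_trans Finset.card_image_le (le_trans (Finset.card_filter_le _ _) ?_)
    simp
  have hsmall : ∀ (g : (Fin (m+5) → Fin n) → β),
      (∀ σ ∈ T, ∀ σ' ∈ T, g σ = g σ' → σ = σ') →
      (T.filter (fun σ => g σ ∈ FC)).card ≤ m + 5 := by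
    intro g hg
    refine le_trans (Finset.card_le_card_of_injOn g ?_ ?_) hFCcard
    · intro σ hσ; exact (Finset.mem_filter.1 hσ).2
    · intro σ h1 σ' h2 hgg
      exact hg σ (Finset.mem_filter.1 h1).1 σ' (Finset.mem_filter.1 h2).1 hgg
  have hsingle : ∀ (g : (Fin (m+5) → Fin n) → β),
      (∀ σ ∈ T, ∀ σ' ∈ T, g σ = g σ' → σ = σ') → ∀ v : β,
      (T.filter (fun σ => g σ = v)).card ≤ 1 := by
    intro g hg v
    refine Finset.card_le_one.2 (fun σ h1 σ' h2 => ?_)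
    refine hg σ (Finset.mem_filter.1 h1).1 σ' (Finset.mem_filter.1 h2).1 ?_
    rw [(Finset.mem_filter.1 h1).2, (Finset.mem_filter.1 h2).2]
  -- choose σA
  set SA : Finset (Fin (m+5) → Fin n) :=
    T.filter (fun σ => c (cE σ i) ∈ FC) ∪ T.filter (fun σ => c (cE σ (i-1)) ∈ FC) with hSAdef
  have hSAcard : SA.card ≤ 2*m+10 := by
    have h1 := hsmall _ keyχ
    have h2 := hsmall _ keyα
    have hh := le_trans (Finset.card_union_le (T.filter (fun σ => c (cE σ i) ∈ FC))
      (T.filter (fun σ => c (cE σ (i-1)) ∈ FC))) (add_le_add h1 h2)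
    exact le_trans (le_of_eq (congrArg Finset.card hSAdef)) (le_trans hh (le_of_eq (by ring)))
  have hTA : (T \ SA).Nonempty := by
    refine Finset.card_pos.1 ?_
    have := Finset.card_le_card_sdiff_add_card (s := T) (t := SA)
    omega
  obtain ⟨σA, hσAmem⟩ := hTA
  have hσAT : σA ∈ T := (Finset.mem_sdiff.1 hσAmem).1
  have hσAn := (Finset.mem_sdiff.1 hσAmem).2
  rw [hSAdef, Finset.mem_union, not_or] at hσAn
  have nA1 : c (cE σA i) ∉ FC := fun h => hσAn.1 (Finset.mem_filter.2 ⟨hσAT, h⟩)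
  have nA2 : c (cE σA (i-1)) ∉ FC := fun h => hσAn.2 (Finset.mem_filter.2 ⟨hσAT, h⟩)
  -- choose σB
  set SB : Finset (Fin (m+5) → Fin n) :=
    T.filter (fun σ => c (cE σ i) ∈ FC) ∪ T.filter (fun σ => c (cE σ (j+1)) ∈ FC)
    ∪ T.filter (fun σ => c (cE σ i) = c (cE σA (i-1)))
    ∪ T.filter (fun σ => c (cE σ (j+1)) = c (cE σA (i-1)))
    ∪ T.filter (fun σ => c (cE σ (j+1)) = c (cE σA i))
    ∪ T.filter (fun σ => σ (j+1) = σA i) ∪ {σA} with hSBdef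
  have hstep : ∀ {s t : Finset (Fin (m+5) → Fin n)} {a b : ℕ}, s.card ≤ a → t.card ≤ b →
      (s ∪ t).card ≤ a + b :=
    fun hs ht => le_trans (Finset.card_union_le _ _) (add_le_add hs ht)
  have hSBcard : SB.card ≤ 2*m+15 := by
    have h1 := hsmall _ keyχ
    have h2 := hsmall _ keyβ
    have h3 := hsingle _ keyχ (c (cE σA (i-1)))
    have h4 := hsingle _ keyβ (c (cE σA (i-1)))
    have h5 := hsingle _ keyβ (c (cE σA i))
    have h6 : (T.filter (fun σ => σ (j+1) = σA i)).card ≤ 1 := by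
      refine Finset.card_le_one.2 (fun σ h1 σ' h2 => ?_)
      refine keyw σ (Finset.mem_filter.1 h1).1 σ' (Finset.mem_filter.1 h2).1 ?_
      rw [(Finset.mem_filter.1 h1).2, (Finset.mem_filter.1 h2).2]
    have hs : ({σA} : Finset (Fin (m+5) → Fin n)).card ≤ 1 := le_of_eq (Finset.card_singleton _)
    have hh := hstep (hstep (hstep (hstep (hstep (hstep h1 h2) h3) h4) h5) h6) hs
    exact le_trans (le_of_eq (congrArg Finset.card hSBdef)) (le_trans hh (le_of_eq (by ring)))
  have hTB : (T \ SB).Nonempty := by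
    refine Finset.card_pos.1 ?_
    have := Finset.card_le_card_sdiff_add_card (s := T) (t := SB)
    omega
  obtain ⟨σB, hσBmem⟩ := hTB
  have hσBT : σB ∈ T := (Finset.mem_sdiff.1 hσBmem).1
  have hσBn := (Finset.mem_sdiff.1 hσBmem).2
  rw [hSBdef, Finset.mem_union, Finset.mem_union, Finset.mem_union, Finset.mem_union,
    Finset.mem_union, Finset.mem_union, not_or, not_or, not_or, not_or, not_or, not_or]
    at hσBn
  obtain ⟨⟨⟨⟨⟨⟨b1, b2⟩, b3⟩, b4⟩, b5⟩, b6⟩, b7⟩ := hσBn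
  have nB1 : c (cE σB i) ∉ FC := fun h => b1 (Finset.mem_filter.2 ⟨hσBT, h⟩)
  have nB2 : c (cE σB (j+1)) ∉ FC := fun h => b2 (Finset.mem_filter.2 ⟨hσBT, h⟩)
  have nB3 : c (cE σB i) ≠ c (cE σA (i-1)) := fun h => b3 (Finset.mem_filter.2 ⟨hσBT, h⟩)
  have nB4 : c (cE σB (j+1)) ≠ c (cE σA (i-1)) := fun h => b4 (Finset.mem_filter.2 ⟨hσBT, h⟩)
  have nB5 : c (cE σB (j+1)) ≠ c (cE σA i) := fun h => b5 (Finset.mem_filter.2 ⟨hσBT, h⟩)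
  have nB6 : σB (j+1) ≠ σA i := fun h => b6 (Finset.mem_filter.2 ⟨hσBT, h⟩)
  have nB7 : σB ≠ σA := fun h => b7 (Finset.mem_singleton.2 h)
  obtain ⟨hσA, hσAcol, hσArb⟩ := hT σA hσAT
  obtain ⟨hσB, hσBcol, hσBrb⟩ := hT σB hσBT
  -- the hybrid cycle
  set τ : Fin (m+5) → Fin n := Function.update σA (j+1) (σB (j+1)) with hτdef
  have τ_at : ∀ x, x ≠ j + 1 → τ x = σA x := fun x hx => Function.update_of_ne hx _ _
  have τ_j1 : τ (j+1) = σB (j+1) := Function.update_self _ _ _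
  have hAB : ∀ x, x ≠ i → x ≠ j + 1 → σA x = σB x := hagree σA hσAT σB hσBT
  have eτ_frame : ∀ x, x ≠ j → x ≠ j + 1 → cE τ x = cE σA x := by
    intro x h1 h2
    rw [cE, cE, τ_at x h2, τ_at (x+1) (succ_ne_succ h1)]
  have eτ_j : cE τ j = cE σB j := by
    rw [cE, cE, τ_at j p6, τ_j1, hAB j p5 p6]
  have eτ_j1 : cE τ (j+1) = cE σB (j+1) := by
    rw [cE, cE, τ_j1, τ_at (j+1+1) p8, hAB (j+1+1) p7 p8]
  -- τ is a cycle
  have hτinj : Function.Injective τ := by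
    intro x y hxy
    by_cases hx : x = j + 1 <;> by_cases hy : y = j + 1
    · rw [hx, hy]
    · exfalso
      rw [hx, τ_j1] at hxy
      rw [τ_at y hy] at hxy
      by_cases hyi : y = i
      · exact nB6 (by rw [hxy, hyi])
      · rw [hAB y hyi hy] at hxy
        exact hy (hσB.1 hxy).symm
    · exfalso
      rw [hy, τ_j1] at hxy
      rw [τ_at x hx] at hxy
      by_cases hxi : x = i
      · exact nB6 (by rw [← hxy, hxi])
      · rw [hAB x hxi hx] at hxy
        exact hx (hσB.1 hxy)
    · rw [τ_at x hx, τ_at y hy] at hxy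
      exact hσA.1 hxy
  have hτadj : ∀ x, G.Adj (τ x) (τ (x+1)) := by
    intro x
    by_cases h1 : x = j
    · rw [h1, τ_at j p6, τ_j1, hAB j p5 p6]
      exact hσB.2 j
    · by_cases h2 : x = j + 1
      · rw [h2, τ_j1, τ_at (j+1+1) p8, hAB (j+1+1) p7 p8]
        exact hσB.2 (j+1)
      · rw [τ_at x h2, τ_at (x+1) (succ_ne_succ h1)]
        exact hσA.2 x
  -- distinctness facts for the special colors
  have hαχA : c (cE σA (i-1)) ≠ c (cE σA i) := by
    have a1 : G.Adj (σA i) (σA (i-1)) := by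
      have := hσA.2 (i-1); rw [sub_add_one] at this; exact this.symm
    have a2 : G.Adj (σA i) (σA (i+1)) := hσA.2 i
    have hne : σA (i-1) ≠ σA (i+1) := by
      intro h
      have h2 : i - 1 = i + 1 := hσA.1 h
      rw [sub_one_eq_iff] at h2
      exact fin2 i (by rw [show i + 2 = i + 1 + 1 by ring, ← h2])
    have := proper_ne hc a1 a2 hne
    intro h
    apply this
    rw [show s(σA i, σA (i-1)) = cE σA (i-1) from by rw [cE, sub_add_one]; exact Sym2.eq_swap, h]
    rfl
  have hχβB : c (cE σB i) ≠ c (cE σB (j+1)) := by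
    rw [hσBcol]
    have a1 : G.Adj (σB (j+1)) (σB j) := (hσB.2 j).symm
    have a2 : G.Adj (σB (j+1)) (σB (j+1+1)) := hσB.2 (j+1)
    have hne : σB j ≠ σB (j+1+1) := by
      intro h
      have h2 : j = j + 1 + 1 := hσB.1 h
      exact fin2 j (by rw [show j + 2 = j + 1 + 1 by ring, ← h2])
    have := proper_ne hc a1 a2 hne
    intro h
    apply this
    rw [show s(σB (j+1), σB j) = cE σB j from Sym2.eq_swap, h]
    rfl
  have hχAB : c (cE σA i) ≠ c (cE σB i) := fun h => nB7 (keyχ σB hσBT σA hσAT h.symm)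
  -- color computations
  have hcol_i1 : c (cE τ (i-1)) = c (cE σA (i-1)) := by rw [eτ_frame (i-1) p9 p4]
  have hcol_i : c (cE τ i) = c (cE σA i) := by rw [eτ_frame i hij1 hij2]
  have hcol_j : c (cE τ j) = c (cE σB i) := by rw [eτ_j, ← hσBcol]
  have hcol_j1 : c (cE τ (j+1)) = c (cE σB (j+1)) := by rw [eτ_j1]
  have hcol_fr : ∀ x, (x ≠ i - 1 ∧ x ≠ i ∧ x ≠ j ∧ x ≠ j + 1) →
      c (cE τ x) = c (cE σA x) ∧ c (cE τ x) ∈ FC := by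
    intro x hx
    have h1 : c (cE τ x) = c (cE σA x) := by rw [eτ_frame x hx.2.2.1 hx.2.2.2]
    refine ⟨h1, ?_⟩
    rw [h1, hce σA hσAT x hx]
    exact Finset.mem_image_of_mem _ (Finset.mem_filter.2 ⟨Finset.mem_univ _, hx⟩)
  -- τ is rainbow
  have hdec : ∀ z : Fin (m+5), z = i - 1 ∨ z = i ∨ z = j ∨ z = j + 1 ∨
      (z ≠ i - 1 ∧ z ≠ i ∧ z ≠ j ∧ z ≠ j + 1) := by
    intro z; tauto
  have hrain : ∀ x y, c (cE τ x) = c (cE τ y) → x = y := by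
    intro x y hxy
    rcases hdec x with hx|hx|hx|hx|hx <;> rcases hdec y with hy|hy|hy|hy|hy
    · rw [hx, hy]
    · exfalso; rw [hx, hcol_i1, hy, hcol_i] at hxy; exact hαχA hxy
    · exfalso; rw [hx, hcol_i1, hy, hcol_j] at hxy; exact nB3 hxy.symm
    · exfalso; rw [hx, hcol_i1, hy, hcol_j1] at hxy; exact nB4 hxy.symm
    · exfalso; rw [hx, hcol_i1] at hxy; exact nA2 (hxy ▸ (hcol_fr y hy).2)
    · exfalso; rw [hx, hcol_i, hy, hcol_i1] at hxy; exact hαχA hxy.symm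
    · rw [hx, hy]
    · exfalso; rw [hx, hcol_i, hy, hcol_j] at hxy; exact hχAB hxy
    · exfalso; rw [hx, hcol_i, hy, hcol_j1] at hxy; exact nB5 hxy.symm
    · exfalso; rw [hx, hcol_i] at hxy; exact nA1 (hxy ▸ (hcol_fr y hy).2)
    · exfalso; rw [hx, hcol_j, hy, hcol_i1] at hxy; exact nB3 hxy
    · exfalso; rw [hx, hcol_j, hy, hcol_i] at hxy; exact hχAB hxy.symm
    · rw [hx, hy]
    · exfalso; rw [hx, hcol_j, hy, hcol_j1] at hxy; exact hχβB hxy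
    · exfalso; rw [hx, hcol_j] at hxy; exact nB1 (hxy ▸ (hcol_fr y hy).2)
    · exfalso; rw [hx, hcol_j1, hy, hcol_i1] at hxy; exact nB4 hxy
    · exfalso; rw [hx, hcol_j1, hy, hcol_i] at hxy; exact nB5 hxy
    · exfalso; rw [hx, hcol_j1, hy, hcol_j] at hxy; exact hχβB hxy.symm
    · rw [hx, hy]
    · exfalso; rw [hx, hcol_j1] at hxy; exact nB2 (hxy ▸ (hcol_fr y hy).2)
    · exfalso; rw [hy, hcol_i1] at hxy; exact nA2 (hxy.symm ▸ (hcol_fr x hx).2)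
    · exfalso; rw [hy, hcol_i] at hxy; exact nA1 (hxy.symm ▸ (hcol_fr x hx).2)
    · exfalso; rw [hy, hcol_j] at hxy; exact nB1 (hxy.symm ▸ (hcol_fr x hx).2)
    · exfalso; rw [hy, hcol_j1] at hxy; exact nB2 (hxy.symm ▸ (hcol_fr x hx).2)
    · rw [(hcol_fr x hx).1, (hcol_fr y hy).1] at hxy
      exact hσArb x y hx hy hxy
  exact hnr (rainbow_of ⟨hτinj, hτadj⟩ hrain)

lemma card_fun_aux {p q : Fin (m+5)} (hpq : p ≠ q) :
    Fintype.card ({x : Fin (m+5) // x ≠ p ∧ x ≠ q} → Fin n) = n ^ (m+3) := by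
  classical
  rw [Fintype.card_fun, Fintype.card_fin, Fintype.card_subtype]
  congr 1
  have h1 : (Finset.univ.filter (fun x : Fin (m+5) => x ≠ p ∧ x ≠ q)) =
      Finset.univ \ {p, q} := by
    ext x
    simp [not_or]
  have h2 : (Finset.univ \ ({p, q} : Finset (Fin (m+5)))).card = m + 3 := by
    rw [Finset.card_sdiff_of_subset (Finset.subset_univ _), Finset.card_univ, Fintype.card_fin,
      Finset.card_insert_of_notMem (by simp [hpq]), Finset.card_singleton]
    omega
  rw [h1, h2]

set_option maxHeartbeats 1000000 in
lemma pattern_bound (hc : IsProperEdgeColoring G c)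
    (hnr : ¬ HasRainbowCopy G c (cycleGraph (m+5)))
    {i j : Fin (m+5)} (hij1 : i ≠ j) (hij2 : i ≠ j + 1) (hij3 : j ≠ i + 1)
    (hij4 : i ≠ j + 1 + 1) :
    (Finset.univ.filter (fun σ : Fin (m+5) → Fin n =>
      IsCyc G σ ∧ c (cE σ i) = c (cE σ j))).card ≤ ((m+5)^2 + (4*m+20)) * n^(m+3) := by
  set L2 := Finset.univ.filter (fun σ : Fin (m+5) → Fin n =>
    IsCyc G σ ∧ c (cE σ i) = c (cE σ j)) with hL2
  have hsplit := Finset.card_filter_add_card_filter_not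
    (s := L2) (p := fun σ => ∀ x y : Fin (m+5), (x ≠ i - 1 ∧ x ≠ i ∧ x ≠ j ∧ x ≠ j + 1) →
      (y ≠ i - 1 ∧ y ≠ i ∧ y ≠ j ∧ y ≠ j + 1) → c (cE σ x) = c (cE σ y) → x = y)
  -- single part
  have hsingle : (L2.filter (fun σ => ∀ x y : Fin (m+5),
      (x ≠ i - 1 ∧ x ≠ i ∧ x ≠ j ∧ x ≠ j + 1) →
      (y ≠ i - 1 ∧ y ≠ i ∧ y ≠ j ∧ y ≠ j + 1) →
      c (cE σ x) = c (cE σ y) → x = y)).card ≤ (4*m+20) * n^(m+3) := by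
    set LS := L2.filter (fun σ => ∀ x y : Fin (m+5),
      (x ≠ i - 1 ∧ x ≠ i ∧ x ≠ j ∧ x ≠ j + 1) →
      (y ≠ i - 1 ∧ y ≠ i ∧ y ≠ j ∧ y ≠ j + 1) →
      c (cE σ x) = c (cE σ y) → x = y) with hLS
    have himg : ∀ ρ ∈ LS.image (fun (σ : Fin (m+5) → Fin n)
        (x : {x : Fin (m+5) // x ≠ i ∧ x ≠ j + 1}) => σ x.1),
        (LS.filter (fun σ => (fun (x : {x : Fin (m+5) // x ≠ i ∧ x ≠ j + 1}) => σ x.1) = ρ)).card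
          ≤ 4*m+20 := by
      intro ρ hρ
      refine fiber_bound hc hnr hij1 hij2 hij4 _ ?_ ?_
      · intro σ hσ
        have h1 := Finset.mem_filter.1 hσ
        have h2 := Finset.mem_filter.1 h1.1
        have h3 := Finset.mem_filter.1 h2.1
        exact ⟨h3.2.1, h3.2.2, h2.2⟩
      · intro σ hσ σ' hσ' x hx1 hx2
        have e1 := (Finset.mem_filter.1 hσ).2
        have e2 := (Finset.mem_filter.1 hσ').2
        exact congrFun (e1.trans e2.symm) ⟨x, hx1, hx2⟩
    have hs1 := Finset.card_le_mul_card_image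
      (f := fun (σ : Fin (m+5) → Fin n) (x : {x : Fin (m+5) // x ≠ i ∧ x ≠ j + 1}) => σ x.1)
      LS (4*m+20) himg
    refine le_trans hs1 (Nat.mul_le_mul_left _ ?_)
    exact le_trans (Finset.card_le_univ _) (le_of_eq (card_fun_aux hij2))
  -- multi part
  have hmulti : (L2.filter (fun σ => ¬ ∀ x y : Fin (m+5),
      (x ≠ i - 1 ∧ x ≠ i ∧ x ≠ j ∧ x ≠ j + 1) →
      (y ≠ i - 1 ∧ y ≠ i ∧ y ≠ j ∧ y ≠ j + 1) →
      c (cE σ x) = c (cE σ y) → x = y)).card ≤ (m+5)^2 * n^(m+3) := by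
    have hcov : L2.filter (fun σ => ¬ ∀ x y : Fin (m+5),
        (x ≠ i - 1 ∧ x ≠ i ∧ x ≠ j ∧ x ≠ j + 1) →
        (y ≠ i - 1 ∧ y ≠ i ∧ y ≠ j ∧ y ≠ j + 1) →
        c (cE σ x) = c (cE σ y) → x = y) ⊆
        Finset.univ.biUnion (fun q : Fin (m+5) × Fin (m+5) =>
          L2.filter (fun σ =>
            (q.1 ≠ i - 1 ∧ q.1 ≠ i ∧ q.1 ≠ j ∧ q.1 ≠ j + 1) ∧
            (q.2 ≠ i - 1 ∧ q.2 ≠ i ∧ q.2 ≠ j ∧ q.2 ≠ j + 1) ∧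
            q.1 ≠ q.2 ∧ c (cE σ q.1) = c (cE σ q.2))) := by
      intro σ hσ
      have h1 := Finset.mem_filter.1 hσ
      have h2 := h1.2
      push_neg at h2
      obtain ⟨a, b, hDa, hDb, hcol2, hab⟩ := h2
      exact Finset.mem_biUnion.2 ⟨(a, b), Finset.mem_univ _,
        Finset.mem_filter.2 ⟨h1.1, hDa, hDb, hab, hcol2⟩⟩
    refine le_trans (Finset.card_le_card hcov) (le_trans Finset.card_biUnion_le ?_)
    refine le_trans (Finset.sum_le_card_nsmul _ _ (n^(m+3)) ?_) ?_
    · intro q hq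
      by_cases hcond : (q.1 ≠ i - 1 ∧ q.1 ≠ i ∧ q.1 ≠ j ∧ q.1 ≠ j + 1) ∧
          (q.2 ≠ i - 1 ∧ q.2 ≠ i ∧ q.2 ≠ j ∧ q.2 ≠ j + 1) ∧ q.1 ≠ q.2
      · have hb1 : j + 1 ≠ q.2 + 1 := fun h => hcond.2.1.2.2.1 (add_right_cancel h).symm
        refine le_trans (Finset.card_le_card_of_injOn
          (fun (σ : Fin (m+5) → Fin n) (x : {x : Fin (m+5) // x ≠ j + 1 ∧ x ≠ q.2 + 1}) => σ x.1)
          (fun σ hσ => Finset.mem_univ _) ?_) ?_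
        · intro σ h1 σ' h2 hres
          have m1 := Finset.mem_filter.1 (Finset.mem_coe.1 h1)
          have m2 := Finset.mem_filter.1 (Finset.mem_coe.1 h2)
          have g1 := Finset.mem_filter.1 m1.1
          have g2 := Finset.mem_filter.1 m2.1
          refine multi_inj hc hij1 hij2 m1.2.1 m1.2.2.1 m1.2.2.2.1 g1.2.1 g2.2.1
            g1.2.2 g2.2.2 m1.2.2.2.2 m2.2.2.2.2 ?_
          intro x hx1 hx2
          exact congrFun hres ⟨x, hx1, hx2⟩
        · exact le_trans (Finset.card_le_univ _) (le_of_eq (card_fun_aux hb1))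
      · have : L2.filter (fun σ =>
            (q.1 ≠ i - 1 ∧ q.1 ≠ i ∧ q.1 ≠ j ∧ q.1 ≠ j + 1) ∧
            (q.2 ≠ i - 1 ∧ q.2 ≠ i ∧ q.2 ≠ j ∧ q.2 ≠ j + 1) ∧
            q.1 ≠ q.2 ∧ c (cE σ q.1) = c (cE σ q.2)) = ∅ := by
          refine Finset.filter_false_of_mem (fun σ hσ => ?_)
          intro hcon
          exact hcond ⟨hcon.1, hcon.2.1, hcon.2.2.1⟩
        rw [this, Finset.card_empty]
        exact Nat.zero_le _
    · rw [smul_eq_mul, Finset.card_univ, Fintype.card_prod, Fintype.card_fin]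
      exact le_of_eq (by ring)
  have hfin : ((m+5)^2 + (4*m+20)) * n^(m+3) = (4*m+20) * n^(m+3) + (m+5)^2 * n^(m+3) := by
    ring
  rw [hfin]
  omega

set_option maxHeartbeats 1000000 in
lemma main_bound (hc : IsProperEdgeColoring G c)
    (hnr : ¬ HasRainbowCopy G c (cycleGraph (m+5))) :
    _root_.copyCount G (cycleGraph (m+5)) ≤ (m+5)^2 * (((m+5)^2 + (4*m+20)) * n^(m+3)) := by
  refine le_trans (copyCount_le_ncard G) ?_
  have h0 : {σ : Fin (m+5) → Fin n | IsCyc G σ}.ncard =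
      (Finset.univ.filter (fun σ : Fin (m+5) → Fin n => IsCyc G σ)).card := by
    rw [← Set.ncard_coe_finset]
    congr 1
    ext σ
    simp
  rw [h0]
  have hcov : Finset.univ.filter (fun σ : Fin (m+5) → Fin n => IsCyc G σ) ⊆
      Finset.univ.biUnion (fun p : Fin (m+5) × Fin (m+5) =>
        if p.1 ≠ p.2 ∧ p.1 ≠ p.2 + 1 ∧ p.2 ≠ p.1 + 1 ∧ p.1 ≠ p.2 + 1 + 1 then
          Finset.univ.filter (fun σ : Fin (m+5) → Fin n =>
            IsCyc G σ ∧ c (cE σ p.1) = c (cE σ p.2))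
        else ∅) := by
    intro σ hσ
    have hcyc : IsCyc G σ := (Finset.mem_filter.1 hσ).2
    obtain ⟨i0, j0, hne, hcol⟩ := exists_repeat hnr hcyc
    have hI1 : j0 ≠ i0 + 1 := rep_indep hc hcyc hne hcol
    have hI2 : i0 ≠ j0 + 1 := rep_indep hc hcyc hne.symm hcol.symm
    by_cases h2 : i0 = j0 + 1 + 1
    · have h3 : j0 ≠ i0 + 1 + 1 := by
        intro h4
        apply fin4 j0
        rw [show j0 + 4 = j0 + 1 + 1 + 1 + 1 by ring, ← h2, ← h4]
      refine Finset.mem_biUnion.2 ⟨(j0, i0), Finset.mem_univ _, ?_⟩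
      rw [if_pos ⟨hne.symm, hI1, hI2, h3⟩]
      exact Finset.mem_filter.2 ⟨Finset.mem_univ _, hcyc, hcol.symm⟩
    · refine Finset.mem_biUnion.2 ⟨(i0, j0), Finset.mem_univ _, ?_⟩
      rw [if_pos ⟨hne, hI2, hI1, h2⟩]
      exact Finset.mem_filter.2 ⟨Finset.mem_univ _, hcyc, hcol⟩
  refine le_trans (Finset.card_le_card hcov) (le_trans Finset.card_biUnion_le ?_)
  refine le_trans (Finset.sum_le_card_nsmul _ _ (((m+5)^2 + (4*m+20)) * n^(m+3)) ?_) ?_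
  · intro p hp
    by_cases hcond : p.1 ≠ p.2 ∧ p.1 ≠ p.2 + 1 ∧ p.2 ≠ p.1 + 1 ∧ p.1 ≠ p.2 + 1 + 1
    · rw [if_pos hcond]
      exact pattern_bound hc hnr hcond.1 hcond.2.1 hcond.2.2.1 hcond.2.2.2
    · rw [if_neg hcond, Finset.card_empty]
      exact Nat.zero_le _
  · rw [smul_eq_mul, Finset.card_univ, Fintype.card_prod, Fintype.card_fin]
    exact le_of_eq (by ring)

end ORC

/-- Upper bound of Theorem 1.2 for odd cycles:
ex(n, C_{2k+1}, rainbow-C_{2k+1}) = O(n^{2k-1}). -/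
theorem odd_cycle_rainbow_upper (k : ℕ) (hk : 2 ≤ k) :
    ∃ C : ℝ, ∀ (n : ℕ) (G : SimpleGraph (Fin n)) (β : Type*) (col : Sym2 (Fin n) → β),
      IsProperEdgeColoring G col → ¬ HasRainbowCopy G col (cycleGraph (2 * k + 1)) →
      (_root_.copyCount G (cycleGraph (2 * k + 1)) : ℝ) ≤ C * (n : ℝ) ^ (2 * k - 1) := by
  obtain ⟨m, hm⟩ : ∃ m, 2 * k + 1 = m + 5 := ⟨2 * k - 4, by omega⟩
  refine ⟨(((m+5)^2 * ((m+5)^2 + (4*m+20)) : ℕ) : ℝ), ?_⟩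
  intro n G β col hc hnr
  rw [hm] at hnr ⊢
  have he : 2 * k - 1 = m + 3 := by omega
  rw [he]
  have hb := ORC.main_bound (m := m) hc hnr
  have hb' : (_root_.copyCount G (cycleGraph (m+5)) : ℝ) ≤
      (((m+5)^2 * (((m+5)^2 + (4*m+20)) * n^(m+3)) : ℕ) : ℝ) := Nat.cast_le.mpr hb
  refine le_trans hb' (le_of_eq ?_)
  push_cast
  ring
end

section
/- For every integer k ≥ 2 there exist a constant c > 0 and an integer n₀ such that for all n ≥ n₀ there is a simple graph G on n vertices together with a proper edge-coloring of G containing no rainbow copy of the cycle C_{2k}, such that G contains at least c·n^{k−1} copies of C_{2k}. (Lower bound of Theorem 1.2 for even cycles: ex(n, C_{2k}, rainbow-C_{2k}) = Ω(n^{k−1}).) -/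
open SimpleGraph

namespace RainbowEven

/-- injective encoding of `Sym2 ℕ` into `ℕ`. -/
def enc : Sym2 ℕ → ℕ := Sym2.lift ⟨fun a b => Nat.pair (min a b) (max a b),
  by intro a b; simp [min_comm, max_comm]⟩

lemma sym2_min_max (a b : ℕ) : s(min a b, max a b) = s(a, b) := by
  rcases le_total a b with h | h
  · rw [min_eq_left h, max_eq_right h]
  · rw [min_eq_right h, max_eq_left h, Sym2.eq_swap]

lemma enc_inj : Function.Injective enc := by
  intro e₁ e₂ h
  induction e₁ using Sym2.ind with
  | _ a b =>
    induction e₂ using Sym2.ind with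
    | _ c d =>
      simp only [enc, Sym2.lift_mk] at h
      rw [Nat.pair_eq_pair] at h
      rw [← sym2_min_max a b, ← sym2_min_max c d, h.1, h.2]

variable (k m : ℕ)

/-- The base relation on `ℕ` defining our graph. Vertices: hubs `0..k-1`;
gadget pairs `k+2j, k+2j+1` for `j < m`; middle vertices `k+2m+i*m+j`. -/
def R : ℕ → ℕ → Prop := fun u v =>
  (∃ j < m, u = 0 ∧ v = k + 2*j) ∨
  (∃ j < m, u = k + 2*j ∧ v = k + 2*j + 1) ∨
  (∃ j < m, u = k + 2*j + 1 ∧ v = 1) ∨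
  (∃ i < k - 2, ∃ j < m, u = i + 1 ∧ v = k + 2*m + i*m + j) ∨
  (∃ i < k - 2, ∃ j < m, u = k + 2*m + i*m + j ∧ v = i + 2) ∨
  (u = k - 1 ∧ v = 0)

def G0 : SimpleGraph ℕ := fromRel (R k m)

def Gr (n : ℕ) : SimpleGraph (Fin n) := (G0 k m).comap Fin.val

/-- the color "rewriting" map : identifies each gadget edge `s(0, k+2j)` with
its partner `s(1, k+2j+1)`. -/
noncomputable def col0 : Sym2 ℕ → ℕ := fun e =>
  if h : ∃ j, j < m ∧ e = s(0, k + 2*j) then enc s(1, k + 2*h.choose + 1) else enc e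

noncomputable def col (n : ℕ) : Sym2 (Fin n) → ℕ := fun e => col0 k m (Sym2.map Fin.val e)

variable {k m}

lemma col0_gadget (hk : 2 ≤ k) {j : ℕ} (hj : j < m) :
    col0 k m s(0, k + 2*j) = enc s(1, k + 2*j + 1) := by
  have h : ∃ j', j' < m ∧ (s(0, k + 2*j) : Sym2 ℕ) = s(0, k + 2*j') := ⟨j, hj, rfl⟩
  rw [col0, dif_pos h]
  have hs := h.choose_spec.2
  rw [Sym2.eq_iff] at hs
  rcases hs with ⟨-, h2⟩ | ⟨h1, -⟩
  · have : h.choose = j := by omega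
    rw [this]
  · omega

lemma col0_other (hk : 2 ≤ k) {e : Sym2 ℕ} (he : ∀ j < m, e ≠ s(0, k + 2*j)) :
    col0 k m e = enc e := by
  rw [col0, dif_neg]
  rintro ⟨j, hj, hje⟩
  exact he j hj hje

end RainbowEven

namespace RainbowEven

variable {k m n : ℕ}

lemma map_val_mem {v : Fin n} {e : Sym2 (Fin n)} (h : v ∈ e) :
    (v : ℕ) ∈ Sym2.map Fin.val e := Sym2.mem_map.2 ⟨v, h, rfl⟩

theorem col_proper (hk : 2 ≤ k) :
    ∀ e₁ e₂ : Sym2 (Fin n), e₁ ≠ e₂ → (∃ v, v ∈ e₁ ∧ v ∈ e₂) →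
      col k m n e₁ ≠ col k m n e₂ := by
  intro e₁ e₂ hne hshare hcol
  have hmapinj : Function.Injective (Sym2.map (Fin.val : Fin n → ℕ)) :=
    Sym2.map.injective Fin.val_injective
  unfold col at hcol
  by_cases h₁ : ∃ j, j < m ∧ Sym2.map Fin.val e₁ = s(0, k + 2*j) <;>
    by_cases h₂ : ∃ j, j < m ∧ Sym2.map Fin.val e₂ = s(0, k + 2*j)
  · obtain ⟨j₁, hj₁, hE₁⟩ := h₁
    obtain ⟨j₂, hj₂, hE₂⟩ := h₂
    rw [hE₁, hE₂, col0_gadget hk hj₁, col0_gadget hk hj₂] at hcol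
    have := enc_inj hcol
    rw [Sym2.eq_iff] at this
    have : j₁ = j₂ := by omega
    subst this
    exact hne (hmapinj (hE₁.trans hE₂.symm))
  · obtain ⟨j₁, hj₁, hE₁⟩ := h₁
    rw [hE₁, col0_gadget hk hj₁, col0_other hk (fun j hj he => h₂ ⟨j, hj, he⟩)] at hcol
    have hE₂ : Sym2.map Fin.val e₂ = s(1, k + 2*j₁ + 1) := (enc_inj hcol).symm
    obtain ⟨v, hv₁, hv₂⟩ := hshare
    have m₁ := map_val_mem hv₁
    have m₂ := map_val_mem hv₂
    rw [hE₁, Sym2.mem_iff] at m₁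
    rw [hE₂, Sym2.mem_iff] at m₂
    omega
  · obtain ⟨j₂, hj₂, hE₂⟩ := h₂
    rw [hE₂, col0_gadget hk hj₂, col0_other hk (fun j hj he => h₁ ⟨j, hj, he⟩)] at hcol
    have hE₁ : Sym2.map Fin.val e₁ = s(1, k + 2*j₂ + 1) := enc_inj hcol
    obtain ⟨v, hv₁, hv₂⟩ := hshare
    have m₁ := map_val_mem hv₁
    have m₂ := map_val_mem hv₂
    rw [hE₁, Sym2.mem_iff] at m₁
    rw [hE₂, Sym2.mem_iff] at m₂
    omega
  · rw [col0_other hk (fun j hj he => h₁ ⟨j, hj, he⟩),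
      col0_other hk (fun j hj he => h₂ ⟨j, hj, he⟩)] at hcol
    exact hne (hmapinj (enc_inj hcol))

end RainbowEven

namespace RainbowEven
variable {k m n : ℕ}


lemma adj_cases {u v : ℕ} (h : (G0 k m).Adj u v) : u ≠ v ∧ (R k m u v ∨ R k m v u) := by
  rwa [G0, fromRel_adj] at h

lemma nbrs_vA (hk : 2 ≤ k) {j x : ℕ} (hj : j < m) (h : (G0 k m).Adj (k + 2*j) x) :
    x = 0 ∨ x = k + 2*j + 1 := by
  obtain ⟨hne, h | h⟩ := adj_cases h <;>
    rcases h with ⟨j', hj', h1, h2⟩ | ⟨j', hj', h1, h2⟩ | ⟨j', hj', h1, h2⟩ |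
      ⟨i, hi, j', hj', h1, h2⟩ | ⟨i, hi, j', hj', h1, h2⟩ | ⟨h1, h2⟩ <;> omega

lemma nbrs_vB (hk : 2 ≤ k) {j x : ℕ} (hj : j < m) (h : (G0 k m).Adj (k + 2*j + 1) x) :
    x = k + 2*j ∨ x = 1 := by
  obtain ⟨hne, h | h⟩ := adj_cases h <;>
    rcases h with ⟨j', hj', h1, h2⟩ | ⟨j', hj', h1, h2⟩ | ⟨j', hj', h1, h2⟩ |
      ⟨i, hi, j', hj', h1, h2⟩ | ⟨i, hi, j', hj', h1, h2⟩ | ⟨h1, h2⟩ <;> omega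

lemma nbrs_x0 (hk : 2 ≤ k) {x : ℕ} (h : (G0 k m).Adj 0 x) :
    (k ≤ x ∧ x < k + 2*m) ∨ x = k - 1 := by
  obtain ⟨hne, h | h⟩ := adj_cases h <;>
    rcases h with ⟨j', hj', h1, h2⟩ | ⟨j', hj', h1, h2⟩ | ⟨j', hj', h1, h2⟩ |
      ⟨i, hi, j', hj', h1, h2⟩ | ⟨i, hi, j', hj', h1, h2⟩ | ⟨h1, h2⟩ <;> omega

lemma adj_hub_mid (hk : 2 ≤ k) {u v : ℕ} (h : (G0 k m).Adj u v)
    (hu0 : u ≠ 0) (hv0 : v ≠ 0)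
    (huB : ¬(k ≤ u ∧ u < k + 2*m)) (hvB : ¬(k ≤ v ∧ v < k + 2*m)) :
    (k + 2*m ≤ u ∧ 1 ≤ v ∧ v < k) ∨ (k + 2*m ≤ v ∧ 1 ≤ u ∧ u < k) := by
  obtain ⟨hne, h | h⟩ := adj_cases h <;>
    rcases h with ⟨j', hj', h1, h2⟩ | ⟨j', hj', h1, h2⟩ | ⟨j', hj', h1, h2⟩ |
      ⟨i, hi, j', hj', h1, h2⟩ | ⟨i, hi, j', hj', h1, h2⟩ | ⟨h1, h2⟩ <;> omega


end RainbowEven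

namespace RainbowEven
variable {k m n : ℕ}

lemma cycle_two_nbrs {N : ℕ} (hN : 4 ≤ N) {V : Type*} {G : SimpleGraph V} (A : G.Subgraph)
    (iso : A.coe ≃g cycleGraph N) {v : V} (hv : v ∈ A.verts) :
    ∃ u₁ u₂ : V, u₁ ≠ u₂ ∧ A.Adj v u₁ ∧ A.Adj v u₂ ∧ ∀ u, A.Adj v u → u = u₁ ∨ u = u₂ := by
  haveI : NeZero N := ⟨by omega⟩
  set w : Fin N := iso ⟨v, hv⟩ with hw
  have h1v : ((1 : Fin N) : ℕ) = 1 := by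
    rw [Fin.val_one']; exact Nat.mod_eq_of_lt (by omega)
  have hadj : ∀ x : Fin N, (cycleGraph N).Adj w x ↔ (x = w + 1 ∨ x = w - 1) := by
    intro x
    rw [cycleGraph_adj']
    constructor
    · rintro (h | h)
      · have h' : w - x = 1 := by apply Fin.ext; rw [h1v]; exact h
        right; rw [← h']; abel
      · have h' : x - w = 1 := by apply Fin.ext; rw [h1v]; exact h
        left; rw [← h']; abel
    · rintro (rfl | rfl)
      · right
        have : w + 1 - w = (1 : Fin N) := by abel
        rw [this, h1v]
      · left
        have : w - (w - 1) = (1 : Fin N) := by abel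
        rw [this, h1v]
  have hne2 : w + 1 ≠ w - 1 := by
    intro h
    have h2 : (w + 1) - (w - 1) = (0 : Fin N) := by rw [h]; abel
    have h3 : (w + 1) - (w - 1) = (1 : Fin N) + (1 : Fin N) := by abel
    rw [h3] at h2
    have h4 := congrArg Fin.val h2
    rw [Fin.val_add, h1v, Fin.val_zero] at h4
    rw [Nat.mod_eq_of_lt (by omega)] at h4
    omega
  have key : ∀ u (hu : u ∈ A.verts), A.Adj v u ↔
      (iso ⟨u, hu⟩ = w + 1 ∨ iso ⟨u, hu⟩ = w - 1) := by
    intro u hu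
    rw [← hadj]
    constructor
    · intro h
      rw [hw, iso.map_adj_iff]
      exact h
    · intro h
      rw [hw] at h
      exact iso.map_adj_iff.mp h
  refine ⟨(iso.symm (w + 1)).1, (iso.symm (w - 1)).1, ?_, ?_, ?_, ?_⟩
  · intro h
    exact hne2 (iso.symm.injective (Subtype.ext h))
  · have hm := (iso.symm (w + 1)).2
    rw [key _ hm]
    left
    simp
  · have hm := (iso.symm (w - 1)).2
    rw [key _ hm]
    right
    simp
  · intro u hu
    have hum : u ∈ A.verts := A.edge_vert hu.symm
    rw [key _ hum] at hu
    rcases hu with h | h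
    · left
      have : (⟨u, hum⟩ : A.verts) = iso.symm (w + 1) := by
        apply iso.injective; simp [h]
      exact congrArg Subtype.val this
    · right
      have : (⟨u, hum⟩ : A.verts) = iso.symm (w - 1) := by
        apply iso.injective; simp [h]
      exact congrArg Subtype.val this

end RainbowEven

namespace RainbowEven
variable {k m n : ℕ}

lemma adj_of_sub {A : (Gr k m n).Subgraph} {a b : Fin n} (h : A.Adj a b) :
    (G0 k m).Adj a.val b.val := A.adj_sub h

theorem no_rainbow (hk : 2 ≤ k) (hn : k + k * m ≤ n)
    (A : (Gr k m n).Subgraph) (iso : A.coe ≃g cycleGraph (2 * k))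
    (inj : Set.InjOn (col k m n) A.edgeSet) : False := by
  have h4 : 4 ≤ 2 * k := by omega
  have h2m : 2 * m ≤ k * m := Nat.mul_le_mul_right m hk
  have hn' : k + 2 * m ≤ n := by omega
  -- Step 1: no gadget vertices in A.verts
  have step1A : ∀ x : Fin n, x ∈ A.verts → ∀ j < m, x.val = k + 2 * j → False := by
    intro x hx j hj hxv
    obtain ⟨u₁, u₂, hne, ha₁, ha₂, -⟩ := cycle_two_nbrs h4 A iso hx
    have hu₁ := nbrs_vA hk hj (hxv ▸ adj_of_sub ha₁)
    have hu₂ := nbrs_vA hk hj (hxv ▸ adj_of_sub ha₂)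
    have hnev : u₁.val ≠ u₂.val := fun h => hne (Fin.val_injective h)
    -- get the neighbors with val 0 and val k+2j+1
    obtain ⟨uA, uB, hA0, hBv, haA, haB⟩ :
        ∃ uA uB : Fin n, uA.val = 0 ∧ uB.val = k + 2 * j + 1 ∧ A.Adj x uA ∧ A.Adj x uB := by
      rcases hu₁ with h1 | h1 <;> rcases hu₂ with h2 | h2
      · omega
      · exact ⟨u₁, u₂, h1, h2, ha₁, ha₂⟩
      · exact ⟨u₂, u₁, h2, h1, ha₂, ha₁⟩
      · omega
    -- neighbors of uB
    have hBmem : uB ∈ A.verts := haB.snd_mem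
    obtain ⟨w₁, w₂, hwne, hb₁, hb₂, -⟩ := cycle_two_nbrs h4 A iso hBmem
    have hw₁ := nbrs_vB hk hj (hBv ▸ adj_of_sub hb₁)
    have hw₂ := nbrs_vB hk hj (hBv ▸ adj_of_sub hb₂)
    have hwnev : w₁.val ≠ w₂.val := fun h => hwne (Fin.val_injective h)
    obtain ⟨w, hw1, haw⟩ : ∃ w : Fin n, w.val = 1 ∧ A.Adj uB w := by
      rcases hw₁ with h1 | h1 <;> rcases hw₂ with h2 | h2
      · omega
      · exact ⟨w₂, h2, hb₂⟩
      · exact ⟨w₁, h1, hb₁⟩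
      · omega
    -- the two forced-equal edges
    have he₁ : s(uA, x) ∈ A.edgeSet := Subgraph.mem_edgeSet.2 haA.symm
    have he₂ : s(uB, w) ∈ A.edgeSet := Subgraph.mem_edgeSet.2 haw
    have hcol₁ : col k m n s(uA, x) = enc s(1, k + 2 * j + 1) := by
      rw [col, Sym2.map_pair_eq, hA0, hxv, col0_gadget hk hj]
    have hcol₂ : col k m n s(uB, w) = enc s(1, k + 2 * j + 1) := by
      rw [col, Sym2.map_pair_eq, hBv, hw1]
      rw [col0_other hk]
      · rw [Sym2.eq_swap]
      · intro j' hj' hcontra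
        rw [Sym2.eq_iff] at hcontra
        omega
    have := inj he₁ he₂ (hcol₁.trans hcol₂.symm)
    have huA : uA ∈ s(uB, w) := this ▸ Sym2.mem_mk_left uA x
    rw [Sym2.mem_iff] at huA
    rcases huA with h | h <;> [skip; skip] <;>
      · have := congrArg Fin.val h
        omega
  have step1 : ∀ x : Fin n, x ∈ A.verts → ¬(k ≤ x.val ∧ x.val < k + 2 * m) := by
    intro x hx ⟨hx1, hx2⟩
    rcases Nat.even_or_odd (x.val - k) with ⟨j, hj⟩ | ⟨j, hj⟩
    · exact step1A x hx j (by omega) (by omega)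
    · -- x = k + 2j + 1 : its neighbors are k+2j and 1; so k+2j ∈ A.verts
      have hxv : x.val = k + 2 * j + 1 := by omega
      have hjm : j < m := by omega
      obtain ⟨u₁, u₂, hne, ha₁, ha₂, -⟩ := cycle_two_nbrs h4 A iso hx
      have hu₁ := nbrs_vB hk hjm (hxv ▸ adj_of_sub ha₁)
      have hu₂ := nbrs_vB hk hjm (hxv ▸ adj_of_sub ha₂)
      have hnev : u₁.val ≠ u₂.val := fun h => hne (Fin.val_injective h)
      obtain ⟨u, huv, hau⟩ : ∃ u : Fin n, u.val = k + 2 * j ∧ A.Adj x u := by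
        rcases hu₁ with h1 | h1 <;> rcases hu₂ with h2 | h2
        · omega
        · exact ⟨u₁, h1, ha₁⟩
        · exact ⟨u₂, h2, ha₂⟩
        · omega
      exact step1A u hau.snd_mem j hjm huv
  -- Step 2: vertex 0 not in A.verts
  have step2 : ∀ x : Fin n, x ∈ A.verts → x.val ≠ 0 := by
    intro x hx hx0
    obtain ⟨u₁, u₂, hne, ha₁, ha₂, -⟩ := cycle_two_nbrs h4 A iso hx
    have hu₁ := nbrs_x0 hk (hx0 ▸ adj_of_sub ha₁)
    have hu₂ := nbrs_x0 hk (hx0 ▸ adj_of_sub ha₂)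
    have hnev : u₁.val ≠ u₂.val := fun h => hne (Fin.val_injective h)
    rcases hu₁ with h1 | h1
    · exact step1 u₁ ha₁.snd_mem h1
    rcases hu₂ with h2 | h2
    · exact step1 u₂ ha₂.snd_mem h2
    omega
  -- Step 3: alternation
  haveI : NeZero (2 * k) := ⟨by omega⟩
  set g : Fin (2 * k) → Fin n := fun i => (iso.symm i).1 with hg
  have hgmem : ∀ i, g i ∈ A.verts := fun i => (iso.symm i).2
  have hginj : Function.Injective g := fun i j h => iso.symm.injective (Subtype.ext h)
  have h1v : ((1 : Fin (2 * k)) : ℕ) = 1 := by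
    rw [Fin.val_one']; exact Nat.mod_eq_of_lt (by omega)
  have hadj : ∀ i : Fin (2 * k), A.Adj (g i) (g (i + 1)) := by
    intro i
    have hc : (cycleGraph (2 * k)).Adj i (i + 1) := by
      rw [cycleGraph_adj']
      right
      have : i + 1 - i = (1 : Fin (2 * k)) := by abel
      rw [this, h1v]
    exact iso.symm.map_adj_iff.2 hc
  set H : Fin (2 * k) → Prop := fun i => (g i).val < k with hH
  have halt : ∀ i, (H (i + 1) ↔ ¬ H i) := by
    intro i
    have hcl := adj_hub_mid hk (adj_of_sub (hadj i))
      (step2 _ (hgmem i)) (step2 _ (hgmem (i + 1)))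
      (step1 _ (hgmem i)) (step1 _ (hgmem (i + 1)))
    simp only [hH]
    rcases hcl with ⟨h1, h2, h3⟩ | ⟨h1, h2, h3⟩ <;> constructor <;> intro <;> omega
  have hstep : ∀ p : ℕ, (hp : p + 1 < 2 * k) →
      ((⟨p, by omega⟩ : Fin (2 * k)) + 1) = ⟨p + 1, hp⟩ := by
    intro p hp
    apply Fin.ext
    simp only [Fin.val_add, h1v, Fin.val_mk]
    exact Nat.mod_eq_of_lt (by omega)
  have hper : ∀ p : ℕ, (hp : p < 2 * k) →
      (H ⟨p, hp⟩ ↔ (H ⟨0, by omega⟩ ↔ p % 2 = 0)) := by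
    intro p
    induction p with
    | zero => intro hp; simp
    | succ q ih =>
      intro hp
      have hq : q < 2 * k := by omega
      have h1 := halt ⟨q, hq⟩
      rw [hstep q hp] at h1
      rw [h1, ih hq]
      have : ¬ ((q + 1) % 2 = 0) ↔ (q % 2 = 0) := by omega
      tauto
  -- Step 4: counting hubs
  have hcard : ∀ p : ℕ, (hp : p < 2 * k) → H ⟨p, hp⟩ →
      1 ≤ (g ⟨p, hp⟩).val ∧ (g ⟨p, hp⟩).val < k := by
    intro p hp hHp
    refine ⟨?_, hHp⟩
    have := step2 _ (hgmem ⟨p, hp⟩)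
    omega
  by_cases hH0 : H ⟨0, by omega⟩
  · -- even positions are hubs
    have hFdef : ∀ i : Fin k, 1 ≤ (g ⟨2 * i.val, by have := i.isLt; omega⟩).val ∧
        (g ⟨2 * i.val, by have := i.isLt; omega⟩).val < k := by
      intro i
      apply hcard
      rw [hper (2 * i.val) (by have := i.isLt; omega)]
      exact ⟨fun _ => by omega, fun _ => hH0⟩
    have hinj : Function.Injective (fun i : Fin k =>
        (⟨(g ⟨2 * i.val, by have := i.isLt; omega⟩).val - 1, by have := hFdef i; omega⟩ : Fin (k - 1))) := by
      intro i₁ i₂ h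
      have h1 := hFdef i₁
      have h2 := hFdef i₂
      have hv := congrArg Fin.val h
      simp only at hv
      have : (g ⟨2 * i₁.val, by have := i₁.isLt; omega⟩).val = (g ⟨2 * i₂.val, by have := i₂.isLt; omega⟩).val := by omega
      have := hginj (Fin.val_injective this)
      have := congrArg Fin.val this
      simp only at this
      exact Fin.val_injective (by omega)
    have := Fintype.card_le_of_injective _ hinj
    simp only [Fintype.card_fin] at this
    omega
  · have hFdef : ∀ i : Fin k, 1 ≤ (g ⟨2 * i.val + 1, by have := i.isLt; omega⟩).val ∧
        (g ⟨2 * i.val + 1, by have := i.isLt; omega⟩).val < k := by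
      intro i
      apply hcard
      rw [hper (2 * i.val + 1) (by have := i.isLt; omega)]
      exact ⟨fun h => absurd h hH0, fun h => absurd h (by omega)⟩
    have hinj : Function.Injective (fun i : Fin k =>
        (⟨(g ⟨2 * i.val + 1, by have := i.isLt; omega⟩).val - 1, by have := hFdef i; omega⟩ : Fin (k - 1))) := by
      intro i₁ i₂ h
      have h1 := hFdef i₁
      have h2 := hFdef i₂
      have hv := congrArg Fin.val h
      simp only at hv
      have : (g ⟨2 * i₁.val + 1, by have := i₁.isLt; omega⟩).val = (g ⟨2 * i₂.val + 1, by have := i₂.isLt; omega⟩).val := by omega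
      have := hginj (Fin.val_injective this)
      have := congrArg Fin.val this
      simp only at this
      exact Fin.val_injective (by omega)
    have := Fintype.card_le_of_injective _ hinj
    simp only [Fintype.card_fin] at this
    omega

end RainbowEven

namespace RainbowEven

variable {k m n : ℕ}

/-- position `p` on the intended `2k`-cycle, as a natural-number vertex. -/
def cyc0 (k m : ℕ) (t' : ℕ → ℕ) : ℕ → ℕ := fun p =>
  if p = 0 then 0
  else if p = 1 then k + 2 * t' 0
  else if p = 2 then k + 2 * t' 0 + 1
  else if p % 2 = 1 then p / 2
  else k + 2 * m + (p / 2 - 2) * m + t' (p / 2 - 1)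

variable {t' : ℕ → ℕ}

lemma cyc0_eval_odd {p : ℕ} (h1 : p % 2 = 1) (h2 : 3 ≤ p) :
    cyc0 k m t' p = p / 2 := by
  rw [cyc0, if_neg (by omega), if_neg (by omega), if_neg (by omega), if_pos h1]

lemma cyc0_eval_even {p : ℕ} (h1 : p % 2 = 0) (h2 : 4 ≤ p) :
    cyc0 k m t' p = k + 2 * m + (p / 2 - 2) * m + t' (p / 2 - 1) := by
  rw [cyc0, if_neg (by omega), if_neg (by omega), if_neg (by omega), if_neg (by omega)]

lemma sub_mul_bound (hk : 2 ≤ k) {i : ℕ} (hi : i < k - 2) {j : ℕ} (hj : j < m) :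
    2 * m + i * m + j < k * m := by
  have h1 : (i + 1) * m ≤ (k - 2) * m := Nat.mul_le_mul (by omega) le_rfl
  have h2 : (i + 1) * m = i * m + m := by ring
  have h3 : (k - 2) * m + 2 * m = k * m := by rw [← Nat.add_mul, Nat.sub_add_cancel hk]
  omega

lemma cyc0_lt (hk : 2 ≤ k) (ht' : ∀ i, t' i < m) {p : ℕ} (hp : p < 2 * k) :
    cyc0 k m t' p < k + k * m := by
  have hm : 0 < m := Nat.pos_of_ne_zero (by intro h; have := ht' 0; omega)
  have h2m : 2 * m ≤ k * m := Nat.mul_le_mul_right m hk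
  rcases Nat.lt_or_ge p 3 with h3 | h3
  · interval_cases p
    · have h0 : cyc0 k m t' 0 = 0 := by simp [cyc0]
      rw [h0]; omega
    · rw [cyc0, if_neg (by omega), if_pos rfl]; have := ht' 0; omega
    · rw [cyc0, if_neg (by omega), if_neg (by omega), if_pos rfl]; have := ht' 0; omega
  · rcases Nat.even_or_odd p with ⟨q, hq⟩ | ⟨q, hq⟩
    · rw [cyc0_eval_even (by omega) (by omega)]
      have hb := sub_mul_bound hk (i := p / 2 - 2) (by omega) (ht' (p / 2 - 1))
      omega
    · rw [cyc0_eval_odd (by omega) (by omega)]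
      omega

/-- decoding of vertex values back to cycle positions. -/
def dec0 (k m : ℕ) (t' : ℕ → ℕ) : ℕ → ℕ := fun v =>
  if v = 0 then 0
  else if v < k then 2 * v + 1
  else if v < k + 2 * m then (if v = k + 2 * t' 0 then 1 else 2)
  else 2 * ((v - (k + 2 * m)) / m) + 4

lemma dec0_cyc0 (hk : 2 ≤ k) (ht' : ∀ i, t' i < m) {p : ℕ} (hp : p < 2 * k) :
    dec0 k m t' (cyc0 k m t' p) = p := by
  have hm : 0 < m := Nat.pos_of_ne_zero (by intro h; have := ht' 0; omega)
  rcases Nat.lt_or_ge p 3 with h3 | h3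
  · interval_cases p
    · have h0 : cyc0 k m t' 0 = 0 := by simp [cyc0]
      rw [h0, dec0]; simp
    · rw [cyc0, if_neg (by omega), if_pos rfl, dec0]
      have h0 := ht' 0
      rw [if_neg (by omega), if_neg (by omega), if_pos (by omega), if_pos rfl]
    · rw [cyc0, if_neg (by omega), if_neg (by omega), if_pos rfl, dec0]
      have h0 := ht' 0
      rw [if_neg (by omega), if_neg (by omega), if_pos (by omega), if_neg (by omega)]
  · rcases Nat.even_or_odd p with ⟨q, hq⟩ | ⟨q, hq⟩
    · rw [cyc0_eval_even (by omega) (by omega), dec0]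
      have hb := ht' (p / 2 - 1)
      have hkey : (k + 2 * m + (p / 2 - 2) * m + t' (p / 2 - 1)) - (k + 2 * m)
          = (p / 2 - 2) * m + t' (p / 2 - 1) := by omega
      rw [if_neg (by omega), if_neg (by omega), if_neg (by omega), hkey]
      have hdiv : ((p / 2 - 2) * m + t' (p / 2 - 1)) / m = p / 2 - 2 := by
        rw [mul_comm, Nat.mul_add_div hm, Nat.div_eq_of_lt hb]
        omega
      rw [hdiv]
      omega
    · rw [cyc0_eval_odd (by omega) (by omega), dec0]
      rw [if_neg (by omega), if_pos (by omega)]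
      omega

lemma cyc0_inj (hk : 2 ≤ k) (ht' : ∀ i, t' i < m) {p q : ℕ}
    (hp : p < 2 * k) (hq : q < 2 * k) (h : cyc0 k m t' p = cyc0 k m t' q) : p = q := by
  have h1 := dec0_cyc0 hk ht' hp
  have h2 := dec0_cyc0 hk ht' hq
  rw [h] at h1
  omega

/-- consecutive cycle positions are adjacent in the base graph. -/
lemma cyc0_adj (hk : 2 ≤ k) (ht' : ∀ i, t' i < m) {p : ℕ} (hp : p < 2 * k) :
    (G0 k m).Adj (cyc0 k m t' p) (cyc0 k m t' ((p + 1) % (2 * k))) := by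
  have hm : 0 < m := Nat.pos_of_ne_zero (by intro h; have := ht' 0; omega)
  have hne : cyc0 k m t' p ≠ cyc0 k m t' ((p + 1) % (2 * k)) := by
    intro h
    have := cyc0_inj hk ht' hp (Nat.mod_lt _ (by omega)) h
    rcases Nat.lt_or_ge (p + 1) (2 * k) with h' | h'
    · rw [Nat.mod_eq_of_lt h'] at this; omega
    · have hp1 : p + 1 = 2 * k := by omega
      rw [hp1, Nat.mod_self] at this; omega
  rw [G0, fromRel_adj]
  refine ⟨hne, Or.inl ?_⟩
  rcases Nat.lt_or_ge (p + 1) (2 * k) with h' | h'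
  · rw [Nat.mod_eq_of_lt h']
    rcases Nat.lt_or_ge p 3 with h3 | h3
    · interval_cases p
      · -- 0 → 1
        rw [cyc0, if_pos rfl, cyc0, if_neg (by omega), if_pos rfl]
        exact Or.inl ⟨t' 0, ht' 0, rfl, rfl⟩
      · rw [cyc0, if_neg (by omega), if_pos rfl, cyc0,
          if_neg (by omega), if_neg (by omega), if_pos rfl]
        exact Or.inr (Or.inl ⟨t' 0, ht' 0, rfl, rfl⟩)
      · -- 2 → 3 : (k + 2j + 1, 1)
        rw [cyc0, if_neg (by omega), if_neg (by omega), if_pos rfl,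
          cyc0_eval_odd (by omega) (by omega)]
        exact Or.inr (Or.inr (Or.inl ⟨t' 0, ht' 0, rfl, by omega⟩))
    · rcases Nat.even_or_odd p with ⟨q, hq⟩ | ⟨q, hq⟩
      · -- even p ≥ 4 : mid (p/2-2) → hub (p/2)
        rw [cyc0_eval_even (by omega) (by omega),
          cyc0_eval_odd (by omega) (by omega)]
        refine Or.inr (Or.inr (Or.inr (Or.inr (Or.inl
          ⟨p / 2 - 2, by omega, t' (p / 2 - 1), ht' _, rfl, by omega⟩))))
      · -- odd p, 3 ≤ p < 2k - 1 : hub (p/2) → mid (p/2-1)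
        rw [cyc0_eval_odd (by omega) (by omega),
          cyc0_eval_even (by omega) (by omega)]
        refine Or.inr (Or.inr (Or.inr (Or.inl
          ⟨p / 2 - 1, by omega, t' ((p + 1) / 2 - 1), ht' _, by omega, ?_⟩)))
        have e1 : (p + 1) / 2 - 2 = p / 2 - 1 := by omega
        rw [e1]
  · -- p = 2k - 1 : hub (k-1) → hub 0
    have hp1 : p + 1 = 2 * k := by omega
    rw [hp1, Nat.mod_self, cyc0_eval_odd (by omega) (by omega), cyc0, if_pos rfl]
    refine Or.inr (Or.inr (Or.inr (Or.inr (Or.inr ⟨by omega, rfl⟩))))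

end RainbowEven

namespace RainbowEven

variable {k m n : ℕ} {t' : ℕ → ℕ}

/-- cyclic successor on `Fin (2*k)`. -/
def pnext (p : Fin (2 * k)) : Fin (2 * k) := ⟨(p.val + 1) % (2 * k), Nat.mod_lt _ p.pos⟩

lemma pnext_eq_add_one [NeZero (2 * k)] (hk : 2 ≤ k) (p : Fin (2 * k)) : pnext p = p + 1 := by
  apply Fin.ext
  rw [pnext, Fin.val_add, Fin.val_one']
  simp only [Fin.val_mk]
  rw [Nat.mod_eq_of_lt (a := 1) (by omega)]

def fcyc (hk : 2 ≤ k) (hn : k + k * m ≤ n) (ht' : ∀ i, t' i < m) :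
    Fin (2 * k) → Fin n :=
  fun p => ⟨cyc0 k m t' p.val, lt_of_lt_of_le (cyc0_lt hk ht' p.isLt) hn⟩

lemma fcyc_inj (hk : 2 ≤ k) (hn : k + k * m ≤ n) (ht' : ∀ i, t' i < m) :
    Function.Injective (fcyc hk hn ht') := by
  intro p q h
  exact Fin.ext (cyc0_inj hk ht' p.isLt q.isLt (congrArg Fin.val h))

def Acyc (hk : 2 ≤ k) (hn : k + k * m ≤ n) (ht' : ∀ i, t' i < m) :
    (Gr k m n).Subgraph where
  verts := Set.range (fcyc hk hn ht')
  Adj u v := ∃ p : Fin (2 * k),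
    (u = fcyc hk hn ht' p ∧ v = fcyc hk hn ht' (pnext p)) ∨
    (v = fcyc hk hn ht' p ∧ u = fcyc hk hn ht' (pnext p))
  adj_sub := by
    rintro u v ⟨p, ⟨rfl, rfl⟩ | ⟨rfl, rfl⟩⟩
    · exact cyc0_adj hk ht' p.isLt
    · exact (cyc0_adj hk ht' p.isLt).symm
  edge_vert := by
    rintro u v ⟨p, ⟨rfl, -⟩ | ⟨-, rfl⟩⟩
    · exact ⟨p, rfl⟩
    · exact ⟨pnext p, rfl⟩
  symm := by
    constructor
    rintro u v ⟨p, h | h⟩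
    · exact ⟨p, Or.inr h⟩
    · exact ⟨p, Or.inl h⟩

lemma cycleGraph_adj_iff {N : ℕ} [NeZero N] (hN : 4 ≤ N) (p q : Fin N) :
    (cycleGraph N).Adj p q ↔ (q = p + 1 ∨ p = q + 1) := by
  have h1v : ((1 : Fin N) : ℕ) = 1 := by
    rw [Fin.val_one']; exact Nat.mod_eq_of_lt (by omega)
  rw [cycleGraph_adj']
  constructor
  · rintro (h | h)
    · have h' : p - q = 1 := by apply Fin.ext; rw [h1v]; exact h
      right; rw [← h']; abel
    · have h' : q - p = 1 := by apply Fin.ext; rw [h1v]; exact h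
      left; rw [← h']; abel
  · rintro (rfl | rfl)
    · right
      have : p + 1 - p = (1 : Fin N) := by abel
      rw [this, h1v]
    · left
      have : q + 1 - q = (1 : Fin N) := by abel
      rw [this, h1v]

noncomputable def AcycIso (hk : 2 ≤ k) (hn : k + k * m ≤ n) (ht' : ∀ i, t' i < m) :
    cycleGraph (2 * k) ≃g (Acyc hk hn ht').coe := by
  haveI : NeZero (2 * k) := ⟨by omega⟩
  refine ⟨Equiv.ofInjective _ (fcyc_inj hk hn ht'), ?_⟩
  intro p q
  have hval : ∀ r : Fin (2 * k),
      ((Equiv.ofInjective _ (fcyc_inj hk hn ht')) r : Fin n) = fcyc hk hn ht' r :=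
    fun r => rfl
  have hco : ∀ r s : Fin (2 * k),
      ((Acyc hk hn ht').coe.Adj ((Equiv.ofInjective _ (fcyc_inj hk hn ht')) r)
        ((Equiv.ofInjective _ (fcyc_inj hk hn ht')) s)) ↔
      (Acyc hk hn ht').Adj (fcyc hk hn ht' r) (fcyc hk hn ht' s) := fun r s => Iff.rfl
  refine Iff.trans (hco p q) ?_
  rw [cycleGraph_adj_iff (by omega)]
  constructor
  · intro h'
    obtain ⟨r, ⟨h1, h2⟩ | ⟨h1, h2⟩⟩ := h'
    · left
      have hp := fcyc_inj hk hn ht' h1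
      have hq := fcyc_inj hk hn ht' h2
      rw [hq, hp, ← pnext_eq_add_one hk]
    · right
      have hp := fcyc_inj hk hn ht' h1
      have hq := fcyc_inj hk hn ht' h2
      rw [hq, hp, ← pnext_eq_add_one hk]
  · rintro (rfl | rfl)
    · exact ⟨p, Or.inl ⟨rfl, by rw [pnext_eq_add_one hk]⟩⟩
    · exact ⟨q, Or.inr ⟨rfl, by rw [pnext_eq_add_one hk]⟩⟩

end RainbowEven

namespace RainbowEven

variable {k m n : ℕ} {t' : ℕ → ℕ}

lemma vM_inj (hk : 2 ≤ k) {i j i' j' : ℕ} (hi : i < k - 2) (hj : j < m)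
    (hi' : i' < k - 2) (hj' : j' < m) (h : i * m + j = i' * m + j') : i = i' ∧ j = j' := by
  have key : i = i' := by
    rcases lt_trichotomy i i' with hlt | he | hgt
    · exfalso
      have ha : (i + 1) * m ≤ i' * m := Nat.mul_le_mul (by omega) le_rfl
      have hb : (i + 1) * m = i * m + m := by ring
      omega
    · exact he
    · exfalso
      have ha : (i' + 1) * m ≤ i * m := Nat.mul_le_mul (by omega) le_rfl
      have hb : (i' + 1) * m = i' * m + m := by ring
      omega
  subst key
  exact ⟨rfl, by omega⟩

lemma cyc0_B_pos (ht' : ∀ i, t' i < m) {p : ℕ} (hp : p < 2 * k)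
    (h1 : k ≤ cyc0 k m t' p) (h2 : cyc0 k m t' p < k + 2 * m) : p = 1 ∨ p = 2 := by
  rcases Nat.lt_or_ge p 3 with h3 | h3
  · interval_cases p
    · have h0 : cyc0 k m t' 0 = 0 := by simp [cyc0]
      rw [h0] at h1
      have := ht' 0
      omega
    · omega
    · omega
  · rcases Nat.even_or_odd p with ⟨q, hq⟩ | ⟨q, hq⟩
    · rw [cyc0_eval_even (by omega) (by omega)] at h1 h2
      omega
    · rw [cyc0_eval_odd (by omega) (by omega)] at h1 h2
      omega

lemma cyc0_mid_pos (ht' : ∀ i, t' i < m) {p : ℕ} (hp : p < 2 * k)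
    (h1 : k + 2 * m ≤ cyc0 k m t' p) : p % 2 = 0 ∧ 4 ≤ p := by
  have hm : 0 < m := Nat.pos_of_ne_zero (by intro h; have := ht' 0; omega)
  rcases Nat.lt_or_ge p 3 with h3 | h3
  · interval_cases p
    · have h0 : cyc0 k m t' 0 = 0 := by simp [cyc0]
      rw [h0] at h1
      omega
    · rw [cyc0, if_neg (by omega), if_pos rfl] at h1
      have := ht' 0
      omega
    · rw [cyc0, if_neg (by omega), if_neg (by omega), if_pos rfl] at h1
      have := ht' 0
      omega
  · rcases Nat.even_or_odd p with ⟨q, hq⟩ | ⟨q, hq⟩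
    · exact ⟨by omega, by omega⟩
    · rw [cyc0_eval_odd (by omega) (by omega)] at h1
      omega

lemma Acyc_inj (hk : 2 ≤ k) (hn : k + k * m ≤ n) {t1 t2 : ℕ → ℕ}
    (h1 : ∀ i, t1 i < m) (h2 : ∀ i, t2 i < m)
    (h : Acyc hk hn h1 = Acyc hk hn h2) : ∀ i < k - 1, t1 i = t2 i := by
  have hv : Set.range (fcyc hk hn h1) = Set.range (fcyc hk hn h2) :=
    congrArg SimpleGraph.Subgraph.verts h
  intro i hi
  rcases Nat.eq_zero_or_pos i with rfl | hipos
  · have hmem : fcyc hk hn h1 ⟨1, by omega⟩ ∈ Set.range (fcyc hk hn h2) := by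
      rw [← hv]; exact ⟨_, rfl⟩
    obtain ⟨p, hp⟩ := hmem
    have hval : cyc0 k m t2 p.val = cyc0 k m t1 1 := congrArg Fin.val hp
    have he1 : cyc0 k m t1 1 = k + 2 * t1 0 := by simp [cyc0]
    have hBp := cyc0_B_pos h2 p.isLt (p := p.val)
      (by rw [hval, he1]; omega) (by rw [hval, he1]; have := h1 0; omega)
    rcases hBp with hB1 | hB2
    · rw [hB1, he1] at hval
      have he2 : cyc0 k m t2 1 = k + 2 * t2 0 := by simp [cyc0]
      rw [he2] at hval
      omega
    · rw [hB2, he1] at hval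
      have he2 : cyc0 k m t2 2 = k + 2 * t2 0 + 1 := by simp [cyc0]
      rw [he2] at hval
      omega
  · -- i ≥ 1, use position 2*i + 2
    have hpos : 2 * i + 2 < 2 * k := by omega
    have hmem : fcyc hk hn h1 ⟨2 * i + 2, hpos⟩ ∈ Set.range (fcyc hk hn h2) := by
      rw [← hv]; exact ⟨_, rfl⟩
    obtain ⟨p, hp⟩ := hmem
    have hval : cyc0 k m t2 p.val = cyc0 k m t1 (2 * i + 2) := congrArg Fin.val hp
    have he1 : cyc0 k m t1 (2 * i + 2) = k + 2 * m + (i - 1) * m + t1 i := by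
      rw [cyc0_eval_even (by omega) (by omega)]
      have e1 : (2 * i + 2) / 2 - 2 = i - 1 := by omega
      have e2 : (2 * i + 2) / 2 - 1 = i := by omega
      rw [e1, e2]
    have hmidp := cyc0_mid_pos h2 p.isLt (p := p.val) (by rw [hval, he1]; omega)
    have he2 : cyc0 k m t2 p.val = k + 2 * m + (p.val / 2 - 2) * m + t2 (p.val / 2 - 1) :=
      cyc0_eval_even (by omega) (by omega)
    rw [he1, he2] at hval
    have hlin : (p.val / 2 - 2) * m + t2 (p.val / 2 - 1) = (i - 1) * m + t1 i := by omega
    have hip : p.val / 2 - 2 < k - 2 := by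
      have := p.isLt
      omega
    obtain ⟨hieq, hteq⟩ := vM_inj hk hip (h2 _) (by omega : i - 1 < k - 2) (h1 i) hlin
    have : p.val / 2 - 1 = i := by omega
    rw [this] at hteq
    exact hteq.symm

lemma subgraph_finite {V : Type*} [Finite V] (G : SimpleGraph V) : Finite G.Subgraph := by
  apply Finite.of_injective (fun A : G.Subgraph => (A.verts, A.Adj))
  rintro A B hAB
  exact SimpleGraph.Subgraph.ext (congrArg Prod.fst hAB) (congrArg Prod.snd hAB)

def tof (τ : Fin (k - 1) → Fin m) : ℕ → ℕ := fun i =>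
  if h : i < k - 1 then (τ ⟨i, h⟩).val else 0

lemma tof_lt (hm : 0 < m) (τ : Fin (k - 1) → Fin m) : ∀ i, tof τ i < m := by
  intro i
  rw [tof]
  split
  · exact (τ _).isLt
  · exact hm

lemma copies_lower (hk : 2 ≤ k) (hn : k + k * m ≤ n) (hm : 0 < m) :
    m ^ (k - 1) ≤
      Set.ncard {A : (Gr k m n).Subgraph | Nonempty (A.coe ≃g cycleGraph (2 * k))} := by
  classical
  haveI := subgraph_finite (Gr k m n)
  set F : (Fin (k - 1) → Fin m) → (Gr k m n).Subgraph :=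
    fun τ => Acyc hk hn (tof_lt hm τ) with hF
  have hFinj : Function.Injective F := by
    intro τ1 τ2 h
    have key := Acyc_inj hk hn (tof_lt hm τ1) (tof_lt hm τ2) h
    funext s
    have hs := key s.val s.isLt
    rw [tof, tof, dif_pos s.isLt, dif_pos s.isLt] at hs
    exact Fin.val_injective hs
  have hsub : Set.range F ⊆
      {A : (Gr k m n).Subgraph | Nonempty (A.coe ≃g cycleGraph (2 * k))} := by
    rintro A ⟨τ, rfl⟩
    exact ⟨(AcycIso hk hn (tof_lt hm τ)).symm⟩
  have h1 : (Set.range F).ncard = m ^ (k - 1) := by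
    rw [← Nat.card_coe_set_eq, Nat.card_range_of_injective hFinj]
    simp [Nat.card_eq_fintype_card]
  calc m ^ (k - 1) = (Set.range F).ncard := h1.symm
    _ ≤ _ := Set.ncard_le_ncard hsub (Set.toFinite _)

end RainbowEven

/-- Lower bound of Theorem 1.2 for even cycles:
ex(n, C_{2k}, rainbow-C_{2k}) = Ω(n^{k-1}). -/
theorem even_cycle_rainbow_lower (k : ℕ) (hk : 2 ≤ k) :
    ∃ c : ℝ, 0 < c ∧ ∃ n₀ : ℕ, ∀ n ≥ n₀,
      ∃ (G : SimpleGraph (Fin n)) (col : Sym2 (Fin n) → ℕ),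
        IsProperEdgeColoring G col ∧ ¬ HasRainbowCopy G col (cycleGraph (2 * k)) ∧
        c * (n : ℝ) ^ (k - 1) ≤ (_root_.copyCount G (cycleGraph (2 * k)) : ℝ) := by
  have hkR : (0 : ℝ) < (k : ℝ) := by exact_mod_cast (by omega : 0 < k)
  have h4k : (0 : ℝ) < 4 * (k : ℝ) := by linarith
  refine ⟨(4 * (k : ℝ))⁻¹ ^ (k - 1), pow_pos (inv_pos.mpr h4k) _, 4 * k, ?_⟩
  intro n hn
  set m := n / (2 * k) with hmdef
  have hk0 : 0 < 2 * k := by omega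
  have hm : 1 ≤ m := by
    rw [hmdef, Nat.le_div_iff_mul_le hk0]
    omega
  have hd := Nat.div_add_mod n (2 * k)
  rw [← hmdef] at hd
  have hr : n % (2 * k) < 2 * k := Nat.mod_lt _ hk0
  have hkm : k ≤ k * m := by
    calc k = k * 1 := (mul_one k).symm
    _ ≤ k * m := Nat.mul_le_mul le_rfl hm
  have hd2 : 2 * (k * m) + n % (2 * k) = n := by
    have he : 2 * (k * m) = 2 * k * m := by ring
    rw [he]
    exact hd
  have hn' : k + k * m ≤ n := by omega
  have hnm : n ≤ 4 * (k * m) := by omega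
  refine ⟨RainbowEven.Gr k m n, RainbowEven.col k m n, ?_, ?_, ?_⟩
  · intro e₁ _ e₂ _ hne hsh
    exact RainbowEven.col_proper hk e₁ e₂ hne hsh
  · rintro ⟨A, ⟨iso⟩, hinj⟩
    exact RainbowEven.no_rainbow hk hn' A iso hinj
  · have hcc : m ^ (k - 1) ≤ _root_.copyCount (RainbowEven.Gr k m n) (cycleGraph (2 * k)) :=
      RainbowEven.copies_lower hk hn' (by omega)
    have hmr : (n : ℝ) ≤ 4 * (k : ℝ) * (m : ℝ) := by
      have h := (Nat.cast_le (α := ℝ)).mpr hnm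
      push_cast at h
      linarith
    have hb : (4 * (k : ℝ))⁻¹ * (n : ℝ) ≤ (m : ℝ) := by
      rw [inv_mul_le_iff₀ h4k]
      linarith
    calc (4 * (k : ℝ))⁻¹ ^ (k - 1) * (n : ℝ) ^ (k - 1)
        = ((4 * (k : ℝ))⁻¹ * (n : ℝ)) ^ (k - 1) := (mul_pow _ _ _).symm
      _ ≤ (m : ℝ) ^ (k - 1) := by
          apply pow_le_pow_left₀ (by positivity) hb
      _ = ((m ^ (k - 1) : ℕ) : ℝ) := by push_cast; ring
      _ ≤ (_root_.copyCount (RainbowEven.Gr k m n) (cycleGraph (2 * k)) : ℝ) := by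
          exact_mod_cast hcc
end

section
/- Let H be a graph on k ≥ 4 vertices. Then there exists a constant C (depending on H) such that for all n, every simple graph G on n vertices that admits a proper edge-coloring with no rainbow copy of H contains at most C·ex*(n, H)·n^{k−3} copies of H, where ex*(n, H) is the rainbow Turán number of H. (Proposition 2.1(i): ex(n, H, rainbow-H) = O(ex*(n, H)·n^{k−3}).) -/
open SimpleGraph

/-- The rainbow Turán number ex*(n, H): the maximum number of edges in an n-vertex
graph admitting a proper edge-coloring with no rainbow copy of H. -/
noncomputable def rainbowTuranNumber {W : Type*} (n : ℕ) (H : SimpleGraph W) : ℕ :=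
  sSup {m : ℕ | ∃ (G : SimpleGraph (Fin n)) (col : Sym2 (Fin n) → ℕ),
    IsProperEdgeColoring G col ∧ ¬ HasRainbowCopy G col H ∧ G.edgeSet.ncard = m}

section Aux

variable {W : Type*} [Fintype W] {H : SimpleGraph W}

lemma edge_bound {n : ℕ} {G : SimpleGraph (Fin n)} {β : Type*} {col : Sym2 (Fin n) → β}
    (hp : IsProperEdgeColoring G col) (hr : ¬ HasRainbowCopy G col H) :
    G.edgeSet.ncard ≤ rainbowTuranNumber n H := by
  classical
  have hfin : (col '' G.edgeSet).Countable := ((Set.toFinite G.edgeSet).image col).countable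
  obtain ⟨f, hf⟩ := Set.countable_iff_exists_injective.mp hfin
  set col' : Sym2 (Fin n) → ℕ := fun e =>
    if h : col e ∈ col '' G.edgeSet then f ⟨col e, h⟩ else 0 with hcol'
  have hc' : ∀ e ∈ G.edgeSet, ∀ e' ∈ G.edgeSet, col e = col e' → col' e = col' e' := by
    intro e he e' he' h
    have h1 : col e ∈ col '' G.edgeSet := ⟨e, he, rfl⟩
    have h2 : col e' ∈ col '' G.edgeSet := ⟨e', he', rfl⟩
    simp only [hcol', dif_pos h1, dif_pos h2]
    exact congrArg f (Subtype.ext h)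
  have hp' : IsProperEdgeColoring G col' := by
    intro e1 h1 e2 h2 hne hshare heq
    have m1 : col e1 ∈ col '' G.edgeSet := ⟨e1, h1, rfl⟩
    have m2 : col e2 ∈ col '' G.edgeSet := ⟨e2, h2, rfl⟩
    simp only [hcol', dif_pos m1, dif_pos m2] at heq
    exact hp e1 h1 e2 h2 hne hshare (congrArg Subtype.val (hf heq))
  have hr' : ¬ HasRainbowCopy G col' H := by
    rintro ⟨A, hiso, hinj⟩
    exact hr ⟨A, hiso, fun a ha b hb hab =>
      hinj ha hb (hc' a (A.edgeSet_subset ha) b (A.edgeSet_subset hb) hab)⟩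
  refine le_csSup ⟨Nat.card (Sym2 (Fin n)), ?_⟩ ⟨G, col', hp', hr', rfl⟩
  rintro m ⟨G', c, -, -, rfl⟩
  calc G'.edgeSet.ncard ≤ (Set.univ : Set (Sym2 (Fin n))).ncard :=
        Set.ncard_le_ncard (Set.subset_univ _) Set.finite_univ
    _ = Nat.card (Sym2 (Fin n)) := Set.ncard_univ _

lemma extract {n : ℕ} {G : SimpleGraph (Fin n)} {β : Type*} {col : Sym2 (Fin n) → β}
    (hp : IsProperEdgeColoring G col) (hr : ¬ HasRainbowCopy G col H)
    (A : G.Subgraph) (hA : Nonempty (A.coe ≃g H)) :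
    ∃ (ψ : W → Fin n) (x y z w : W),
      A.verts = Set.range ψ ∧
      (∀ a b, A.Adj a b ↔ ∃ u v, H.Adj u v ∧ ψ u = a ∧ ψ v = b) ∧
      G.Adj (ψ x) (ψ y) ∧ G.Adj (ψ z) (ψ w) ∧
      col s(ψ x, ψ y) = col s(ψ z, ψ w) ∧
      ψ x ≠ ψ z ∧ ψ x ≠ ψ w ∧ ψ y ≠ ψ z ∧ ψ y ≠ ψ w := by
  classical
  obtain ⟨φ⟩ := hA
  set ψ : W → Fin n := fun u => (φ.symm u : Fin n) with hψ
  have hvert : A.verts = Set.range ψ := by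
    ext a
    constructor
    · intro ha
      exact ⟨φ ⟨a, ha⟩, by simp [hψ]⟩
    · rintro ⟨u, rfl⟩
      exact (φ.symm u).2
  have hadj : ∀ a b, A.Adj a b ↔ ∃ u v, H.Adj u v ∧ ψ u = a ∧ ψ v = b := by
    intro a b
    constructor
    · intro h
      refine ⟨φ ⟨a, A.edge_vert h⟩, φ ⟨b, A.edge_vert h.symm⟩, ?_, by simp [hψ], by simp [hψ]⟩
      exact φ.map_adj_iff.mpr h
    · rintro ⟨u, v, huv, rfl, rfl⟩
      exact (φ.symm.map_adj_iff.mpr huv : A.coe.Adj _ _)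
  have hninj : ¬ Set.InjOn col A.edgeSet := fun h => hr ⟨A, ⟨φ⟩, h⟩
  rw [Set.InjOn] at hninj
  push_neg at hninj
  obtain ⟨e, he, f, hfm, hcolef, hef⟩ := hninj
  have hrep : ∀ e ∈ A.edgeSet, ∃ a b : Fin n, e = s(a, b) ∧ A.Adj a b := by
    intro e he
    induction e using Sym2.ind with
    | _ a b => exact ⟨a, b, rfl, SimpleGraph.Subgraph.mem_edgeSet.mp he⟩
  obtain ⟨a, b, rfl, hab⟩ := hrep e he
  obtain ⟨c, d, rfl, hcd⟩ := hrep f hfm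
  have heG : s(a, b) ∈ G.edgeSet := A.edgeSet_subset he
  have hfG : s(c, d) ∈ G.edgeSet := A.edgeSet_subset hfm
  have hdisj : a ≠ c ∧ a ≠ d ∧ b ≠ c ∧ b ≠ d := by
    refine ⟨?_, ?_, ?_, ?_⟩ <;> rintro rfl
    · exact hp _ heG _ hfG hef ⟨a, by simp, by simp⟩ hcolef
    · exact hp _ heG _ hfG hef ⟨a, by simp, by simp⟩ hcolef
    · exact hp _ heG _ hfG hef ⟨b, by simp, by simp⟩ hcolef
    · exact hp _ heG _ hfG hef ⟨b, by simp, by simp⟩ hcolef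
  have hmem : ∀ v, v ∈ A.verts → ∃ u, ψ u = v := by
    intro v hv
    rw [hvert] at hv
    exact hv
  obtain ⟨x, hx⟩ := hmem a (A.edge_vert hab)
  obtain ⟨y, hy⟩ := hmem b (A.edge_vert hab.symm)
  obtain ⟨z, hz⟩ := hmem c (A.edge_vert hcd)
  obtain ⟨w', hw⟩ := hmem d (A.edge_vert hcd.symm)
  subst hx hy hz hw
  exact ⟨ψ, x, y, z, w', hvert, hadj, hab.adj_sub, hcd.adj_sub, hcolef,
    hdisj.1, hdisj.2.1, hdisj.2.2.1, hdisj.2.2.2⟩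

set_option maxHeartbeats 1000000 in
lemma count_bound {n : ℕ} {G : SimpleGraph (Fin n)} {β : Type*} {col : Sym2 (Fin n) → β}
    (hp : IsProperEdgeColoring G col) (hr : ¬ HasRainbowCopy G col H) :
    _root_.copyCount G H ≤ 2 * (Fintype.card W) ^ 4 * G.edgeSet.ncard * n ^ (Fintype.card W - 3) := by
  classical
  set S := {A : G.Subgraph | Nonempty (A.coe ≃g H)} with hSdef
  rcases Set.eq_empty_or_nonempty S with hSe | ⟨A₀, hA₀⟩
  · rw [_root_.copyCount, ← hSdef, hSe]
    simp
  choose ψ x y z w hvert hadj hGxy hGzw hcol hxz hxw hyz hyw using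
    fun A : S => extract hp hr A.1 A.2
  -- a subgraph in S is determined by its ψ
  have hrecon : ∀ A B : S, ψ A = ψ B → A = B := by
    intro A B h
    apply Subtype.ext
    apply SimpleGraph.Subgraph.ext
    · rw [hvert A, hvert B, h]
    · funext a b
      apply propext
      rw [hadj A a b, hadj B a b, h]
  have hSfin : S.Finite := by
    have : Finite S := Finite.of_injective (fun A => ψ A) (fun A B h => hrecon A B h)
    exact Set.toFinite S
  let P : W × W × W × W → Prop := fun p =>
    p.1 ≠ p.2.1 ∧ p.1 ≠ p.2.2.1 ∧ p.1 ≠ p.2.2.2 ∧ p.2.1 ≠ p.2.2.1 ∧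
      p.2.1 ≠ p.2.2.2 ∧ p.2.2.1 ≠ p.2.2.2
  have hdistinct : ∀ A : S, P (x A, y A, z A, w A) :=
    fun A => ⟨fun h => (hGxy A).ne (congrArg (ψ A) h),
      fun h => hxz A (congrArg (ψ A) h),
      fun h => hxw A (congrArg (ψ A) h),
      fun h => hyz A (congrArg (ψ A) h),
      fun h => hyw A (congrArg (ψ A) h),
      fun h => (hGzw A).ne (congrArg (ψ A) h)⟩
  let D := {p : W × W × W × W // P p}
  let d₀ : D × G.Dart :=
    (⟨_, hdistinct ⟨A₀, hA₀⟩⟩, ⟨(_, _), hGxy ⟨A₀, hA₀⟩⟩)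
  let g : G.Subgraph → D × G.Dart := fun A =>
    if h : A ∈ S then
      (⟨(x ⟨A, h⟩, y ⟨A, h⟩, z ⟨A, h⟩, w ⟨A, h⟩), hdistinct ⟨A, h⟩⟩,
        ⟨(ψ ⟨A, h⟩ (x ⟨A, h⟩), ψ ⟨A, h⟩ (y ⟨A, h⟩)), hGxy ⟨A, h⟩⟩)
    else d₀
  have hg : ∀ (A : G.Subgraph) (h : A ∈ S), g A =
      (⟨(x ⟨A, h⟩, y ⟨A, h⟩, z ⟨A, h⟩, w ⟨A, h⟩), hdistinct ⟨A, h⟩⟩,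
        ⟨(ψ ⟨A, h⟩ (x ⟨A, h⟩), ψ ⟨A, h⟩ (y ⟨A, h⟩)), hGxy ⟨A, h⟩⟩) :=
    fun A h => dif_pos h
  set SF := hSfin.toFinset with hSF
  have hcards : SF.card = ∑ t : D × G.Dart, (SF.filter (fun A => g A = t)).card :=
    Finset.card_eq_sum_card_fiberwise (fun A _ => Finset.mem_univ (g A))
  -- cardinality of the subtype of non-excluded vertices
  have hsub3 : ∀ a b c : W, a ≠ b → a ≠ c → b ≠ c →
      Fintype.card {v : W // v ≠ a ∧ v ≠ b ∧ v ≠ c} = Fintype.card W - 3 := by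
    intro a b c hab hac hbc
    have he : {v : W // v ≠ a ∧ v ≠ b ∧ v ≠ c} ≃ {v : W // ¬ v ∈ ({a, b, c} : Finset W)} :=
      Equiv.subtypeEquivRight (by intro v; simp [not_or])
    have h3 : Fintype.card {v : W // v ∈ ({a, b, c} : Finset W)} = 3 := by
      rw [Fintype.card_coe]
      exact Finset.card_eq_three.mpr ⟨a, b, c, hab, hac, hbc, rfl⟩
    rw [Fintype.card_congr he, Fintype.card_subtype_compl, h3]
  have hfiber : ∀ t : D × G.Dart, (SF.filter (fun A => g A = t)).card ≤
      n ^ (Fintype.card W - 3) := by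
    intro t
    have hcardFt : Fintype.card
        ({v : W // v ≠ t.1.1.1 ∧ v ≠ t.1.1.2.1 ∧ v ≠ t.1.1.2.2.2} → Fin n)
        = n ^ (Fintype.card W - 3) := by
      rw [Fintype.card_fun, Fintype.card_fin,
        hsub3 _ _ _ t.1.2.1 t.1.2.2.2.1 t.1.2.2.2.2.2.1]
    let F : G.Subgraph → ({v : W // v ≠ t.1.1.1 ∧ v ≠ t.1.1.2.1 ∧ v ≠ t.1.1.2.2.2} → Fin n) := fun A =>
      if h : A ∈ S then (fun v => ψ ⟨A, h⟩ v.1) else (fun _ => t.2.fst)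
    have hinj : Set.InjOn F (SF.filter (fun A => g A = t)) := by
      intro A₁ hm₁ A₂ hm₂ hF
      simp only [Finset.coe_filter, Set.mem_setOf_eq, hSF, Set.Finite.mem_toFinset] at hm₁ hm₂
      obtain ⟨h₁, ht₁⟩ := hm₁
      obtain ⟨h₂, ht₂⟩ := hm₂
      set B₁ : S := ⟨A₁, h₁⟩
      set B₂ : S := ⟨A₂, h₂⟩
      have hgg : (⟨(x B₁, y B₁, z B₁, w B₁), hdistinct B₁⟩ : D) =
            ⟨(x B₂, y B₂, z B₂, w B₂), hdistinct B₂⟩ ∧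
          (⟨(ψ B₁ (x B₁), ψ B₁ (y B₁)), hGxy B₁⟩ : G.Dart) =
            ⟨(ψ B₂ (x B₂), ψ B₂ (y B₂)), hGxy B₂⟩ := by
        have := (hg A₁ h₁).symm.trans (ht₁.trans (ht₂.symm.trans (hg A₂ h₂)))
        exact ⟨congrArg Prod.fst this, congrArg Prod.snd this⟩
      have hq : (x B₁, y B₁, z B₁, w B₁) = (x B₂, y B₂, z B₂, w B₂) :=
        congrArg Subtype.val hgg.1
      have hx : x B₁ = x B₂ := congrArg (fun p => p.1) hq
      have hy : y B₁ = y B₂ := congrArg (fun p => p.2.1) hq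
      have hz : z B₁ = z B₂ := congrArg (fun p => p.2.2.1) hq
      have hw : w B₁ = w B₂ := congrArg (fun p => p.2.2.2) hq
      have hpx : ψ B₁ (x B₁) = ψ B₂ (x B₂) :=
        congrArg (fun d => d.toProd.1) hgg.2
      have hpy : ψ B₁ (y B₁) = ψ B₂ (y B₂) :=
        congrArg (fun d => d.toProd.2) hgg.2
      -- t's vertex coordinates
      have htq : t.1.1 = (x B₁, y B₁, z B₁, w B₁) := by
        rw [← ht₁, hg A₁ h₁]
      have hFv : ∀ v : {v : W // v ≠ t.1.1.1 ∧ v ≠ t.1.1.2.1 ∧ v ≠ t.1.1.2.2.2},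
          ψ B₁ v.1 = ψ B₂ v.1 := by
        intro v
        have h1 : F A₁ = fun v => ψ B₁ v.1 := dif_pos h₁
        have h2 : F A₂ = fun v => ψ B₂ v.1 := dif_pos h₂
        have := congrFun ((h1.symm.trans hF).trans h2) v
        exact this
      have hsame : ∀ v : W, v ≠ x B₁ → v ≠ y B₁ → v ≠ w B₁ → ψ B₁ v = ψ B₂ v := by
        intro v h1 h2 h3
        exact hFv ⟨v, by rw [htq]; exact ⟨h1, h2, h3⟩⟩
      have hpz : ψ B₁ (z B₁) = ψ B₂ (z B₂) := by
        rw [← hz]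
        exact hsame (z B₁) (Ne.symm (hdistinct B₁).2.1) (Ne.symm (hdistinct B₁).2.2.2.1)
          (hdistinct B₁).2.2.2.2.2
      have hpw : ψ B₁ (w B₁) = ψ B₂ (w B₂) := by
        have hc1 : col s(ψ B₁ (z B₁), ψ B₁ (w B₁)) = col s(ψ B₂ (z B₂), ψ B₂ (w B₂)) := by
          rw [← hcol B₁, ← hcol B₂, hpx, hpy]
        have hf12 : s(ψ B₁ (z B₁), ψ B₁ (w B₁)) = s(ψ B₂ (z B₂), ψ B₂ (w B₂)) := by
          by_contra hne
          exact hp _ (G.mem_edgeSet.mpr (hGzw B₁)) _ (G.mem_edgeSet.mpr (hGzw B₂)) hne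
            ⟨ψ B₁ (z B₁), by simp, by rw [hpz]; simp⟩ hc1
        rw [← hpz] at hf12
        exact Sym2.congr_right.mp hf12
      have hψeq : ψ B₁ = ψ B₂ := by
        funext v
        by_cases e1 : v = x B₁
        · rw [e1, hpx, hx]
        by_cases e2 : v = y B₁
        · rw [e2, hpy, hy]
        by_cases e3 : v = w B₁
        · rw [e3, hpw, hw]
        · exact hsame v e1 e2 e3
      exact congrArg Subtype.val (hrecon B₁ B₂ hψeq)
    calc (SF.filter (fun A => g A = t)).card
        ≤ (Finset.univ : Finset ({v : W // v ≠ t.1.1.1 ∧ v ≠ t.1.1.2.1 ∧ v ≠ t.1.1.2.2.2} → Fin n)).card :=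
          Finset.card_le_card_of_injOn F (fun _ _ => Finset.mem_univ _) hinj
      _ = Fintype.card ({v : W // v ≠ t.1.1.1 ∧ v ≠ t.1.1.2.1 ∧ v ≠ t.1.1.2.2.2} → Fin n) := Finset.card_univ
      _ = n ^ (Fintype.card W - 3) := hcardFt
  have hcount : _root_.copyCount G H = SF.card := by
    rw [_root_.copyCount, ← hSdef, Set.ncard_eq_toFinset_card _ hSfin]
  have hDle : Fintype.card D ≤ (Fintype.card W) ^ 4 := by
    calc Fintype.card D ≤ Fintype.card (W × W × W × W) := Fintype.card_subtype_le _
      _ = (Fintype.card W) ^ 4 := by simp [Fintype.card_prod]; ring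
  have hDart : Fintype.card G.Dart = 2 * G.edgeSet.ncard := by
    rw [SimpleGraph.dart_card_eq_twice_card_edges]
    congr 1
    rw [← SimpleGraph.coe_edgeFinset, Set.ncard_coe_finset]
  calc _root_.copyCount G H = ∑ t : D × G.Dart, (SF.filter (fun A => g A = t)).card := by
        rw [hcount, hcards]
    _ ≤ ∑ _t : D × G.Dart, n ^ (Fintype.card W - 3) :=
        Finset.sum_le_sum (fun t _ => hfiber t)
    _ = Fintype.card (D × G.Dart) * n ^ (Fintype.card W - 3) := by
        rw [Finset.sum_const, Finset.card_univ, smul_eq_mul]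
    _ ≤ ((Fintype.card W) ^ 4 * (2 * G.edgeSet.ncard)) * n ^ (Fintype.card W - 3) := by
        apply Nat.mul_le_mul_right
        rw [Fintype.card_prod, hDart]
        exact Nat.mul_le_mul_right _ hDle
    _ = 2 * (Fintype.card W) ^ 4 * G.edgeSet.ncard * n ^ (Fintype.card W - 3) := by ring

end Aux

/-- Proposition 2.1(i): ex(n, H, rainbow-H) = O(ex*(n, H)·n^{k-3}) for H on k ≥ 4 vertices. -/
theorem rainbow_general_upper_i {W : Type*} [Fintype W] (H : SimpleGraph W)
    (hk : 4 ≤ Fintype.card W) :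
    ∃ C : ℝ, ∀ (n : ℕ) (G : SimpleGraph (Fin n)) (β : Type*) (col : Sym2 (Fin n) → β),
      IsProperEdgeColoring G col → ¬ HasRainbowCopy G col H →
      (_root_.copyCount G H : ℝ) ≤
        C * (rainbowTuranNumber n H : ℝ) * (n : ℝ) ^ (Fintype.card W - 3) := by
  refine ⟨2 * (Fintype.card W : ℝ) ^ 4, ?_⟩
  intro n G β col hp hr
  have h1 := count_bound (H := H) hp hr
  have h2 := edge_bound (H := H) hp hr
  calc (_root_.copyCount G H : ℝ)
      ≤ ((2 * (Fintype.card W) ^ 4 * G.edgeSet.ncard * n ^ (Fintype.card W - 3) : ℕ) : ℝ) :=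
        Nat.cast_le.mpr h1
    _ ≤ 2 * (Fintype.card W : ℝ) ^ 4 * (rainbowTuranNumber n H : ℝ) *
        (n : ℝ) ^ (Fintype.card W - 3) := by
        push_cast
        gcongr
end

section
/- For all integers p, r ≥ 1 there exists a constant C (depending on p and r) such that for all n, every simple graph G on n vertices that admits a proper edge-coloring with no rainbow copy of the double star S_{p,r} contains at most C·n copies of S_{p,r}. (Upper bound of the Proposition on double stars: ex(n, S_{p,r}, rainbow-S_{p,r}) = O(n).) -/
open SimpleGraph

/-- The double star S_{p,r}: an edge uv together with p leaves adjacent to u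
and r leaves adjacent to v. -/
def doubleStar (p r : ℕ) : SimpleGraph (Fin 2 ⊕ (Fin p ⊕ Fin r)) :=
  SimpleGraph.fromRel (fun a b =>
    (a = Sum.inl 0 ∧ b = Sum.inl 1) ∨
    (a = Sum.inl 0 ∧ ∃ i, b = Sum.inr (Sum.inl i)) ∨
    (a = Sum.inl 1 ∧ ∃ j, b = Sum.inr (Sum.inr j)))

lemma ds_adj {p r : ℕ} (x y : Fin 2 ⊕ (Fin p ⊕ Fin r)) :
    (doubleStar p r).Adj x y ↔
      (x = Sum.inl 0 ∧ y = Sum.inl 1) ∨ (x = Sum.inl 1 ∧ y = Sum.inl 0) ∨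
      (x = Sum.inl 0 ∧ ∃ i, y = Sum.inr (Sum.inl i)) ∨
      (y = Sum.inl 0 ∧ ∃ i, x = Sum.inr (Sum.inl i)) ∨
      (x = Sum.inl 1 ∧ ∃ j, y = Sum.inr (Sum.inr j)) ∨
      (y = Sum.inl 1 ∧ ∃ j, x = Sum.inr (Sum.inr j)) := by
  simp only [doubleStar, fromRel_adj]
  constructor
  · rintro ⟨hne, h | h⟩ <;> rcases h with ⟨h1,h2⟩|⟨h1,h2⟩|⟨h1,h2⟩ <;> tauto
  · rintro (⟨h1,h2⟩|⟨h1,h2⟩|⟨h1,⟨i,h2⟩⟩|⟨h1,⟨i,h2⟩⟩|⟨h1,⟨j,h2⟩⟩|⟨h1,⟨j,h2⟩⟩) <;> subst h1 <;> subst h2 <;>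
      refine ⟨by simp [Fin.ext_iff], ?_⟩ <;> tauto

lemma proper_inj {V β : Type*} {G : SimpleGraph V} {col : Sym2 V → β}
    (hc : IsProperEdgeColoring G col) {x y z : V} (hy : G.Adj x y) (hz : G.Adj x z)
    (h : col s(x,y) = col s(x,z)) : y = z := by
  by_contra hne
  refine hc _ (G.mem_edgeSet.mpr hy) _ (G.mem_edgeSet.mpr hz) ?_ ⟨x, by simp, by simp⟩ h
  intro he
  rw [Sym2.eq_iff] at he
  rcases he with ⟨-, h2⟩ | ⟨h1, h2⟩
  · exact hne h2
  · exact hne (h2.trans h1)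

variable {n : ℕ} {G : SimpleGraph (Fin n)}

/-- The double-star subgraph with centers u, v, leaf sets A, B. -/
def dsSub (G : SimpleGraph (Fin n)) (u v : Fin n) (A B : Finset (Fin n))
    (huv : G.Adj u v) (hAu : ∀ a ∈ A, G.Adj u a) (hBv : ∀ b ∈ B, G.Adj v b) : G.Subgraph where
  verts := {u, v} ∪ ↑A ∪ ↑B
  Adj x y := (x = u ∧ y = v) ∨ (x = v ∧ y = u) ∨ (x = u ∧ y ∈ A) ∨ (x ∈ A ∧ y = u) ∨
    (x = v ∧ y ∈ B) ∨ (x ∈ B ∧ y = v)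
  adj_sub := by
    rintro x y (⟨rfl,rfl⟩|⟨rfl,rfl⟩|⟨rfl,h⟩|⟨h,rfl⟩|⟨rfl,h⟩|⟨h,rfl⟩)
    exacts [huv, huv.symm, hAu _ h, (hAu _ h).symm, hBv _ h, (hBv _ h).symm]
  edge_vert := by
    rintro x y (⟨rfl,-⟩|⟨rfl,-⟩|⟨rfl,-⟩|⟨h,-⟩|⟨rfl,-⟩|⟨h,-⟩) <;> simp [*]
  symm := ⟨by rintro x y h; tauto⟩

lemma core_rainbow {β : Type*} {col : Sym2 (Fin n) → β}
    (hc : IsProperEdgeColoring G col) {p r : ℕ} {u v : Fin n} (huv : G.Adj u v)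
    {A B : Finset (Fin n)}
    (hAu : ∀ a ∈ A, G.Adj u a) (hvA : v ∉ A) (hAcard : A.card = p)
    (hBv : ∀ b ∈ B, G.Adj v b) (huB : u ∉ B) (hBcard : B.card = r)
    (hAB : Disjoint A B)
    (hcol : ∀ a ∈ A, ∀ b ∈ B, col s(u,a) ≠ col s(v,b)) :
    HasRainbowCopy G col (doubleStar p r) := by
  classical
  have hne : u ≠ v := huv.ne
  have huA : u ∉ A := fun h => G.loopless.irrefl u (hAu u h)
  have hvB : v ∉ B := fun h => G.loopless.irrefl v (hBv v h)
  have hABd : ∀ x, x ∈ A → x ∈ B → False := fun x h1 h2 => Finset.disjoint_left.mp hAB h1 h2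
  set H : G.Subgraph := dsSub G u v A B huv hAu hBv with hH
  have hHadj : ∀ x y, H.Adj x y ↔ ((x = u ∧ y = v) ∨ (x = v ∧ y = u) ∨ (x = u ∧ y ∈ A) ∨
      (x ∈ A ∧ y = u) ∨ (x = v ∧ y ∈ B) ∨ (x ∈ B ∧ y = v)) := fun x y => Iff.rfl
  have hHverts : H.verts = {u, v} ∪ ↑A ∪ ↑B := rfl
  -- the vertex equivalence
  let eA : ↥A ≃ Fin p := A.equivFinOfCardEq hAcard
  let eB : ↥B ≃ Fin r := B.equivFinOfCardEq hBcard
  have hu : u ∈ H.verts := by rw [hHverts]; simp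
  have hv : v ∈ H.verts := by rw [hHverts]; simp
  have hA' : ∀ i : Fin p, (eA.symm i : Fin n) ∈ H.verts := by
    intro i; rw [hHverts]; exact Or.inl (Or.inr (eA.symm i).2)
  have hB' : ∀ j : Fin r, (eB.symm j : Fin n) ∈ H.verts := by
    intro j; rw [hHverts]; exact Or.inr (eB.symm j).2
  have hAmem : ∀ i : Fin p, (eA.symm i : Fin n) ∈ A := fun i => (eA.symm i).2
  have hBmem : ∀ j : Fin r, (eB.symm j : Fin n) ∈ B := fun j => (eB.symm j).2
  have hAinj : ∀ i i' : Fin p, (eA.symm i : Fin n) = (eA.symm i' : Fin n) → i = i' :=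
    fun i i' h => eA.symm.injective (Subtype.ext h)
  have hBinj : ∀ j j' : Fin r, (eB.symm j : Fin n) = (eB.symm j' : Fin n) → j = j' :=
    fun j j' h => eB.symm.injective (Subtype.ext h)
  let F : Fin 2 ⊕ (Fin p ⊕ Fin r) → ↥H.verts := fun x =>
    Sum.elim (fun k => ![(⟨u, hu⟩ : ↥H.verts), ⟨v, hv⟩] k)
      (Sum.elim (fun i => ⟨(eA.symm i : Fin n), hA' i⟩) (fun j => ⟨(eB.symm j : Fin n), hB' j⟩)) x
  have hk2 : ∀ k : Fin 2, k = 0 ∨ k = 1 := by decide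
  have hFbij : Function.Bijective F := by
    constructor
    · rintro (k | i | j) (k' | i' | j') hxy <;>
        simp only [F, Sum.elim_inl, Sum.elim_inr] at hxy
      · rcases hk2 k with rfl | rfl <;> rcases hk2 k' with rfl | rfl <;>
          simp only [Matrix.cons_val_zero, Matrix.cons_val_one, Matrix.head_cons,
            Subtype.mk.injEq] at hxy <;>
          first | rfl | exact absurd hxy hne | exact absurd hxy.symm hne
      · rcases hk2 k with rfl | rfl <;>
          simp only [Matrix.cons_val_zero, Matrix.cons_val_one, Matrix.head_cons,
            Subtype.mk.injEq] at hxy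
        · exact absurd (by rw [hxy]; exact hAmem i') huA
        · exact absurd (by rw [hxy]; exact hAmem i') hvA
      · rcases hk2 k with rfl | rfl <;>
          simp only [Matrix.cons_val_zero, Matrix.cons_val_one, Matrix.head_cons,
            Subtype.mk.injEq] at hxy
        · exact absurd (by rw [hxy]; exact hBmem j') huB
        · exact absurd (by rw [hxy]; exact hBmem j') hvB
      · rcases hk2 k' with rfl | rfl <;>
          simp only [Matrix.cons_val_zero, Matrix.cons_val_one, Matrix.head_cons,
            Subtype.mk.injEq] at hxy
        · exact absurd (by rw [← hxy]; exact hAmem i) huA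
        · exact absurd (by rw [← hxy]; exact hAmem i) hvA
      · simp only [Subtype.mk.injEq] at hxy
        rw [hAinj i i' hxy]
      · simp only [Subtype.mk.injEq] at hxy
        exact (hABd _ (hAmem i) (by rw [hxy]; exact hBmem j')).elim
      · rcases hk2 k' with rfl | rfl <;>
          simp only [Matrix.cons_val_zero, Matrix.cons_val_one, Matrix.head_cons,
            Subtype.mk.injEq] at hxy
        · exact absurd (by rw [← hxy]; exact hBmem j) huB
        · exact absurd (by rw [← hxy]; exact hBmem j) hvB
      · simp only [Subtype.mk.injEq] at hxy
        exact (hABd _ (hAmem i') (by rw [← hxy]; exact hBmem j)).elim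
      · simp only [Subtype.mk.injEq] at hxy
        rw [hBinj j j' hxy]
    · rintro ⟨x, hx⟩
      rw [hHverts] at hx
      rcases hx with (hx | hx) | hx
      · rcases hx with rfl | rfl
        · exact ⟨Sum.inl 0, by simp [F]⟩
        · exact ⟨Sum.inl 1, by simp [F]⟩
      · refine ⟨Sum.inr (Sum.inl (eA ⟨x, hx⟩)), ?_⟩
        simp only [F, Sum.elim_inr, Sum.elim_inl, Equiv.symm_apply_apply]
      · refine ⟨Sum.inr (Sum.inr (eB ⟨x, hx⟩)), ?_⟩
        simp only [F, Sum.elim_inr, Equiv.symm_apply_apply]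
  have hAne_u : ∀ i : Fin p, (eA.symm i : Fin n) ≠ u := fun i h => huA (h ▸ hAmem i)
  have hAne_v : ∀ i : Fin p, (eA.symm i : Fin n) ≠ v := fun i h => hvA (h ▸ hAmem i)
  have hBne_u : ∀ j : Fin r, (eB.symm j : Fin n) ≠ u := fun j h => huB (h ▸ hBmem j)
  have hBne_v : ∀ j : Fin r, (eB.symm j : Fin n) ≠ v := fun j h => hvB (h ▸ hBmem j)
  have hAnB : ∀ i : Fin p, (eA.symm i : Fin n) ∉ B := fun i h => hABd _ (hAmem i) h
  have hBnA : ∀ j : Fin r, (eB.symm j : Fin n) ∉ A := fun j h => hABd _ h (hBmem j)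
  refine ⟨H, ⟨SimpleGraph.Iso.symm ⟨Equiv.ofBijective F hFbij, ?_⟩⟩, ?_⟩
  · intro x y
    show H.coe.Adj (F x) (F y) ↔ (doubleStar p r).Adj x y
    rw [Subgraph.coe_adj, hHadj, ds_adj]
    rcases x with k | i | j <;> rcases y with k' | i' | j' <;>
      [rcases hk2 k with rfl | rfl <;> rcases hk2 k' with rfl | rfl;
       rcases hk2 k with rfl | rfl; rcases hk2 k with rfl | rfl;
       rcases hk2 k' with rfl | rfl; skip; skip;
       rcases hk2 k' with rfl | rfl; skip; skip] <;>
      simp [F, hne, hne.symm, huA, hvA, huB, hvB, hAmem, hBmem, hAne_u, hAne_v,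
        hBne_u, hBne_v, hAnB, hBnA, Fin.ext_iff]
  · have hedge : ∀ e ∈ H.edgeSet, e = s(u,v) ∨ (∃ a ∈ A, e = s(u,a)) ∨ (∃ b ∈ B, e = s(v,b)) := by
      intro e he
      induction e using Sym2.ind with
      | _ x y =>
        rw [Subgraph.mem_edgeSet, hHadj] at he
        rcases he with ⟨rfl,rfl⟩|⟨rfl,rfl⟩|⟨rfl,h⟩|⟨h,rfl⟩|⟨rfl,h⟩|⟨h,rfl⟩
        · exact Or.inl rfl
        · exact Or.inl Sym2.eq_swap
        · exact Or.inr (Or.inl ⟨y, h, rfl⟩)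
        · exact Or.inr (Or.inl ⟨x, h, Sym2.eq_swap⟩)
        · exact Or.inr (Or.inr ⟨y, h, rfl⟩)
        · exact Or.inr (Or.inr ⟨x, h, Sym2.eq_swap⟩)
    intro e he e' he' hcc
    rcases hedge e he with rfl | ⟨a, ha, rfl⟩ | ⟨b, hb, rfl⟩ <;>
      rcases hedge e' he' with rfl | ⟨a', ha', rfl⟩ | ⟨b', hb', rfl⟩
    · rfl
    · rw [proper_inj hc huv (hAu a' ha') hcc]
    · rw [show (s(u,v) : Sym2 (Fin n)) = s(v,u) from Sym2.eq_swap] at hcc ⊢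
      rw [proper_inj hc huv.symm (hBv b' hb') hcc]
    · rw [← proper_inj hc (hAu a ha) huv hcc]
    · rw [proper_inj hc (hAu a ha) (hAu a' ha') hcc]
    · exact absurd hcc (hcol a ha b' hb')
    · rw [show (s(u,v) : Sym2 (Fin n)) = s(v,u) from Sym2.eq_swap] at hcc ⊢
      rw [← proper_inj hc (hBv b hb) huv.symm hcc]
    · exact absurd hcc.symm (hcol a' ha' b hb)
    · rw [proper_inj hc (hBv b hb) (hBv b' hb') hcc]

lemma conflict_card_le [DecidableRel G.Adj] {β : Type*} [DecidableEq β] {col : Sym2 (Fin n) → β}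
    (hc : IsProperEdgeColoring G col) (u v : Fin n) (A : Finset (Fin n)) :
    ((G.neighborFinset v).filter (fun w => ∃ a ∈ A, col s(v,w) = col s(u,a))).card ≤ A.card := by
  classical
  refine Finset.card_le_card_of_injOn
    (fun w => if h : ∃ a ∈ A, col s(v,w) = col s(u,a) then h.choose else w) ?_ ?_
  · intro w hw
    rw [Finset.mem_coe, Finset.mem_filter] at hw
    beta_reduce
    rw [dif_pos hw.2]
    exact hw.2.choose_spec.1
  · intro w hw w' hw' hww
    simp only [Finset.coe_filter, Set.mem_setOf_eq] at hw hw'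
    beta_reduce at hww
    rw [dif_pos hw.2, dif_pos hw'.2] at hww
    have h1 := hw.2.choose_spec.2
    have h2 := hw'.2.choose_spec.2
    rw [hww] at h1
    refine proper_inj hc ?_ ?_ (h1.trans h2.symm)
    · exact (G.mem_neighborFinset v w).mp hw.1
    · exact (G.mem_neighborFinset v w').mp hw'.1

lemma cor1 [DecidableRel G.Adj] {β : Type*} [DecidableEq β] {col : Sym2 (Fin n) → β} {p r : ℕ}
    (hc : IsProperEdgeColoring G col) {u v : Fin n} (huv : G.Adj u v)
    (hdu : p + 1 ≤ G.degree u) (hdv : 2*p + r + 1 ≤ G.degree v) :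
    HasRainbowCopy G col (doubleStar p r) := by
  classical
  have h1 : p ≤ ((G.neighborFinset u).erase v).card := by
    rw [Finset.card_erase_of_mem ((G.mem_neighborFinset u v).mpr huv)]
    have : G.degree u = (G.neighborFinset u).card := rfl
    omega
  obtain ⟨A, hAsub, hAcard⟩ := Finset.exists_subset_card_eq h1
  have hAu : ∀ a ∈ A, G.Adj u a := fun a ha =>
    (G.mem_neighborFinset u a).mp (Finset.mem_of_mem_erase (hAsub ha))
  have hvA : v ∉ A := fun h => Finset.notMem_erase v _ (hAsub h)
  set conf := (G.neighborFinset v).filter (fun w => ∃ a ∈ A, col s(v,w) = col s(u,a)) with hconf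
  have hconfcard : conf.card ≤ p := hAcard ▸ conflict_card_le hc u v A
  set bad := insert u (A ∪ conf) with hbad
  have hbadcard : bad.card ≤ 2*p + 1 := by
    calc bad.card ≤ (A ∪ conf).card + 1 := Finset.card_insert_le _ _
    _ ≤ A.card + conf.card + 1 := by have := Finset.card_union_le A conf; omega
    _ ≤ 2*p + 1 := by omega
  have h2 : r ≤ (G.neighborFinset v \ bad).card := by
    have := Finset.le_card_sdiff bad (G.neighborFinset v)
    have hdeg : G.degree v = (G.neighborFinset v).card := rfl
    omega
  obtain ⟨B, hBsub, hBcard⟩ := Finset.exists_subset_card_eq h2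
  have hBmem : ∀ b ∈ B, b ∈ G.neighborFinset v ∧ b ∉ bad := by
    intro b hb; have := hBsub hb; rw [Finset.mem_sdiff] at this; exact this
  refine core_rainbow hc huv hAu hvA hAcard (fun b hb => (G.mem_neighborFinset v b).mp (hBmem b hb).1)
    (fun h => (hBmem u h).2 (Finset.mem_insert_self _ _)) hBcard ?_ ?_
  · rw [Finset.disjoint_left]
    intro a ha hab
    exact (hBmem a hab).2 (Finset.mem_insert_of_mem (Finset.mem_union_left _ ha))
  · intro a ha b hb hcolab
    refine (hBmem b hb).2 (Finset.mem_insert_of_mem (Finset.mem_union_right _ ?_))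
    rw [hconf, Finset.mem_filter]
    exact ⟨(hBmem b hb).1, a, ha, hcolab.symm⟩

lemma cor2 [DecidableRel G.Adj] {β : Type*} [DecidableEq β] {col : Sym2 (Fin n) → β} {p r : ℕ}
    (hc : IsProperEdgeColoring G col) {u v : Fin n} (huv : G.Adj u v)
    (hdu : 2*r + p + 1 ≤ G.degree u) (hdv : r + 1 ≤ G.degree v) :
    HasRainbowCopy G col (doubleStar p r) := by
  classical
  have h1 : r ≤ ((G.neighborFinset v).erase u).card := by
    rw [Finset.card_erase_of_mem ((G.mem_neighborFinset v u).mpr huv.symm)]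
    have : G.degree v = (G.neighborFinset v).card := rfl
    omega
  obtain ⟨B, hBsub, hBcard⟩ := Finset.exists_subset_card_eq h1
  have hBv : ∀ b ∈ B, G.Adj v b := fun b hb =>
    (G.mem_neighborFinset v b).mp (Finset.mem_of_mem_erase (hBsub hb))
  have huB : u ∉ B := fun h => Finset.notMem_erase u _ (hBsub h)
  set conf := (G.neighborFinset u).filter (fun w => ∃ b ∈ B, col s(u,w) = col s(v,b)) with hconf
  have hconfcard : conf.card ≤ r := hBcard ▸ conflict_card_le hc v u B
  set bad := insert v (B ∪ conf) with hbad
  have hbadcard : bad.card ≤ 2*r + 1 := by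
    calc bad.card ≤ (B ∪ conf).card + 1 := Finset.card_insert_le _ _
    _ ≤ B.card + conf.card + 1 := by have := Finset.card_union_le B conf; omega
    _ ≤ 2*r + 1 := by omega
  have h2 : p ≤ (G.neighborFinset u \ bad).card := by
    have := Finset.le_card_sdiff bad (G.neighborFinset u)
    have hdeg : G.degree u = (G.neighborFinset u).card := rfl
    omega
  obtain ⟨A, hAsub, hAcard⟩ := Finset.exists_subset_card_eq h2
  have hAmem : ∀ a ∈ A, a ∈ G.neighborFinset u ∧ a ∉ bad := by
    intro a ha; have := hAsub ha; rw [Finset.mem_sdiff] at this; exact this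
  refine core_rainbow hc huv (fun a ha => (G.mem_neighborFinset u a).mp (hAmem a ha).1)
    (fun h => (hAmem v h).2 (Finset.mem_insert_self _ _)) hAcard hBv huB hBcard ?_ ?_
  · rw [Finset.disjoint_left]
    intro a ha hab
    exact (hAmem a ha).2 (Finset.mem_insert_of_mem (Finset.mem_union_left _ hab))
  · intro a ha b hb hcolab
    refine (hAmem a ha).2 (Finset.mem_insert_of_mem (Finset.mem_union_right _ ?_))
    rw [hconf, Finset.mem_filter]
    exact ⟨(hAmem a ha).1, b, hb, hcolab⟩

lemma fin2_cases : ∀ k : Fin 2, k = 0 ∨ k = 1 := by decide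

section extract
variable {p r : ℕ} (A : G.Subgraph) (φ : A.coe ≃g doubleStar p r)

lemma copy_adj_of_ds {x y : Fin 2 ⊕ (Fin p ⊕ Fin r)} (h : (doubleStar p r).Adj x y) :
    A.Adj ↑(φ.symm x) ↑(φ.symm y) := by
  have := φ.symm.map_rel_iff.mpr h
  rwa [Subgraph.coe_adj] at this

lemma copy_adj_iff (x y : Fin n) :
    A.Adj x y ↔ ((x = ↑(φ.symm (Sum.inl 0)) ∧ y = ↑(φ.symm (Sum.inl 1))) ∨
      (x = ↑(φ.symm (Sum.inl 1)) ∧ y = ↑(φ.symm (Sum.inl 0))) ∨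
      (∃ i, x = ↑(φ.symm (Sum.inl 0)) ∧ y = ↑(φ.symm (Sum.inr (Sum.inl i)))) ∨
      (∃ i, x = ↑(φ.symm (Sum.inr (Sum.inl i))) ∧ y = ↑(φ.symm (Sum.inl 0))) ∨
      (∃ j, x = ↑(φ.symm (Sum.inl 1)) ∧ y = ↑(φ.symm (Sum.inr (Sum.inr j)))) ∨
      (∃ j, x = ↑(φ.symm (Sum.inr (Sum.inr j))) ∧ y = ↑(φ.symm (Sum.inl 1)))) := by
  constructor
  · intro h
    have hx : x ∈ A.verts := A.edge_vert h
    have hy : y ∈ A.verts := A.edge_vert h.symm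
    have h' : (doubleStar p r).Adj (φ ⟨x, hx⟩) (φ ⟨y, hy⟩) :=
      φ.map_rel_iff.mpr (by rwa [Subgraph.coe_adj])
    have hxx : ∀ c, φ ⟨x, hx⟩ = c → x = ↑(φ.symm c) := by
      rintro c rfl; rw [RelIso.symm_apply_apply]
    have hyy : ∀ c, φ ⟨y, hy⟩ = c → y = ↑(φ.symm c) := by
      rintro c rfl; rw [RelIso.symm_apply_apply]
    rcases (ds_adj _ _).mp h' with ⟨h1,h2⟩|⟨h1,h2⟩|⟨h1,i,h2⟩|⟨h1,i,h2⟩|⟨h1,j,h2⟩|⟨h1,j,h2⟩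
    · exact Or.inl ⟨hxx _ h1, hyy _ h2⟩
    · exact Or.inr (Or.inl ⟨hxx _ h1, hyy _ h2⟩)
    · exact Or.inr (Or.inr (Or.inl ⟨i, hxx _ h1, hyy _ h2⟩))
    · exact Or.inr (Or.inr (Or.inr (Or.inl ⟨i, hxx _ h2, hyy _ h1⟩)))
    · exact Or.inr (Or.inr (Or.inr (Or.inr (Or.inl ⟨j, hxx _ h1, hyy _ h2⟩))))
    · exact Or.inr (Or.inr (Or.inr (Or.inr (Or.inr ⟨j, hxx _ h2, hyy _ h1⟩))))
  · rintro (⟨rfl,rfl⟩|⟨rfl,rfl⟩|⟨i,rfl,rfl⟩|⟨i,rfl,rfl⟩|⟨j,rfl,rfl⟩|⟨j,rfl,rfl⟩)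
    · exact copy_adj_of_ds A φ ((ds_adj _ _).mpr (Or.inl ⟨rfl, rfl⟩))
    · exact copy_adj_of_ds A φ ((ds_adj _ _).mpr (Or.inr (Or.inl ⟨rfl, rfl⟩)))
    · exact copy_adj_of_ds A φ ((ds_adj _ _).mpr (Or.inr (Or.inr (Or.inl ⟨rfl, i, rfl⟩))))
    · exact copy_adj_of_ds A φ ((ds_adj _ _).mpr (Or.inr (Or.inr (Or.inr (Or.inl ⟨rfl, i, rfl⟩)))))
    · exact copy_adj_of_ds A φ ((ds_adj _ _).mpr (Or.inr (Or.inr (Or.inr (Or.inr (Or.inl ⟨rfl, j, rfl⟩))))))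
    · exact copy_adj_of_ds A φ ((ds_adj _ _).mpr (Or.inr (Or.inr (Or.inr (Or.inr (Or.inr ⟨rfl, j, rfl⟩))))))

lemma copy_verts_iff (x : Fin n) : x ∈ A.verts ↔
    x = ↑(φ.symm (Sum.inl 0)) ∨ x = ↑(φ.symm (Sum.inl 1)) ∨
    (∃ i, x = ↑(φ.symm (Sum.inr (Sum.inl i)))) ∨
    (∃ j, x = ↑(φ.symm (Sum.inr (Sum.inr j)))) := by
  constructor
  · intro hx
    have hxx : ∀ c, φ ⟨x, hx⟩ = c → x = ↑(φ.symm c) := by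
      rintro c rfl; rw [RelIso.symm_apply_apply]
    rcases hφ : φ ⟨x, hx⟩ with k | i | j
    · rcases fin2_cases k with rfl | rfl
      · exact Or.inl (hxx _ hφ)
      · exact Or.inr (Or.inl (hxx _ hφ))
    · exact Or.inr (Or.inr (Or.inl ⟨i, hxx _ hφ⟩))
    · exact Or.inr (Or.inr (Or.inr ⟨j, hxx _ hφ⟩))
  · rintro (rfl|rfl|⟨i,rfl⟩|⟨j,rfl⟩) <;> exact (φ.symm _).2

end extract

lemma copy_facts [DecidableRel G.Adj] {p r : ℕ} {β : Type*} [DecidableEq β]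
    {col : Sym2 (Fin n) → β} (hc : IsProperEdgeColoring G col)
    (hnr : ¬ HasRainbowCopy G col (doubleStar p r))
    (A : G.Subgraph) (φ : A.coe ≃g doubleStar p r) :
    G.Adj ↑(φ.symm (Sum.inl 0)) ↑(φ.symm (Sum.inl 1)) ∧
    G.degree ↑(φ.symm (Sum.inl 0)) ≤ 2*p + 2*r ∧
    G.degree ↑(φ.symm (Sum.inl 1)) ≤ 2*p + 2*r ∧
    (∀ i, G.Adj ↑(φ.symm (Sum.inl 0)) ↑(φ.symm (Sum.inr (Sum.inl i)))) ∧
    (∀ j, G.Adj ↑(φ.symm (Sum.inl 1)) ↑(φ.symm (Sum.inr (Sum.inr j)))) := by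
  have ginj : Function.Injective (fun x : Fin 2 ⊕ (Fin p ⊕ Fin r) => (↑(φ.symm x) : Fin n)) :=
    fun x y hxy => φ.symm.injective (Subtype.ext hxy)
  have huv : G.Adj ↑(φ.symm (Sum.inl 0)) ↑(φ.symm (Sum.inl 1)) :=
    A.adj_sub (copy_adj_of_ds A φ ((ds_adj _ _).mpr (Or.inl ⟨rfl, rfl⟩)))
  have hai : ∀ i, G.Adj ↑(φ.symm (Sum.inl 0)) ↑(φ.symm (Sum.inr (Sum.inl i))) := fun i =>
    A.adj_sub (copy_adj_of_ds A φ ((ds_adj _ _).mpr (Or.inr (Or.inr (Or.inl ⟨rfl, i, rfl⟩)))))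
  have hbj : ∀ j, G.Adj ↑(φ.symm (Sum.inl 1)) ↑(φ.symm (Sum.inr (Sum.inr j))) := fun j =>
    A.adj_sub (copy_adj_of_ds A φ ((ds_adj _ _).mpr (Or.inr (Or.inr (Or.inr (Or.inr (Or.inl ⟨rfl, j, rfl⟩)))))))
  have hdu1 : p + 1 ≤ G.degree ↑(φ.symm (Sum.inl 0)) := by
    have hsub : insert (↑(φ.symm (Sum.inl 1)) : Fin n)
        (Finset.image (fun i => (↑(φ.symm (Sum.inr (Sum.inl i))) : Fin n)) Finset.univ)
        ⊆ G.neighborFinset ↑(φ.symm (Sum.inl 0)) := by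
      intro x hx
      rw [Finset.mem_insert] at hx
      rcases hx with rfl | hx
      · exact (G.mem_neighborFinset _ _).mpr huv
      · obtain ⟨i, -, rfl⟩ := Finset.mem_image.mp hx
        exact (G.mem_neighborFinset _ _).mpr (hai i)
    have hcard : (insert (↑(φ.symm (Sum.inl 1)) : Fin n)
        (Finset.image (fun i => (↑(φ.symm (Sum.inr (Sum.inl i))) : Fin n)) Finset.univ)).card
        = p + 1 := by
      rw [Finset.card_insert_of_notMem, Finset.card_image_of_injective _
        (fun i i' h => by simpa using ginj h), Finset.card_univ, Fintype.card_fin]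
      intro hmem
      obtain ⟨i, -, hi⟩ := Finset.mem_image.mp hmem
      simpa using ginj hi
    calc p + 1 = _ := hcard.symm
    _ ≤ (G.neighborFinset ↑(φ.symm (Sum.inl 0))).card := Finset.card_le_card hsub
  have hdv1 : r + 1 ≤ G.degree ↑(φ.symm (Sum.inl 1)) := by
    have hsub : insert (↑(φ.symm (Sum.inl 0)) : Fin n)
        (Finset.image (fun j => (↑(φ.symm (Sum.inr (Sum.inr j))) : Fin n)) Finset.univ)
        ⊆ G.neighborFinset ↑(φ.symm (Sum.inl 1)) := by
      intro x hx
      rw [Finset.mem_insert] at hx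
      rcases hx with rfl | hx
      · exact (G.mem_neighborFinset _ _).mpr huv.symm
      · obtain ⟨j, -, rfl⟩ := Finset.mem_image.mp hx
        exact (G.mem_neighborFinset _ _).mpr (hbj j)
    have hcard : (insert (↑(φ.symm (Sum.inl 0)) : Fin n)
        (Finset.image (fun j => (↑(φ.symm (Sum.inr (Sum.inr j))) : Fin n)) Finset.univ)).card
        = r + 1 := by
      rw [Finset.card_insert_of_notMem, Finset.card_image_of_injective _
        (fun j j' h => by simpa using ginj h), Finset.card_univ, Fintype.card_fin]
      intro hmem
      obtain ⟨j, -, hj⟩ := Finset.mem_image.mp hmem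
      simpa using ginj hj
    calc r + 1 = _ := hcard.symm
    _ ≤ (G.neighborFinset ↑(φ.symm (Sum.inl 1))).card := Finset.card_le_card hsub
  refine ⟨huv, ?_, ?_, hai, hbj⟩
  · by_contra hgt
    exact hnr (cor2 hc huv (by omega) hdv1)
  · by_contra hgt
    exact hnr (cor1 hc huv hdu1 (by omega))

/-- Upper bound of the proposition on double stars:
ex(n, S_{p,r}, rainbow-S_{p,r}) = O(n). -/
theorem double_star_rainbow_upper (p r : ℕ) (hp : 1 ≤ p) (hr : 1 ≤ r) :
    ∃ C : ℝ, ∀ (n : ℕ) (G : SimpleGraph (Fin n)) (β : Type*) (col : Sym2 (Fin n) → β),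
      IsProperEdgeColoring G col → ¬ HasRainbowCopy G col (doubleStar p r) →
      (_root_.copyCount G (doubleStar p r) : ℝ) ≤ C * (n : ℝ) := by
  classical
  refine ⟨(((2*p + 2*r : ℕ) : ℝ))^(p+r+1), ?_⟩
  intro n G β col hc hnr
  haveI : DecidableRel G.Adj := Classical.decRel _
  haveI : DecidableEq β := Classical.decEq _
  set K := 2*p + 2*r with hK
  set S := {A : G.Subgraph | Nonempty (A.coe ≃g doubleStar p r)} with hS
  have hCC : _root_.copyCount G (doubleStar p r) = S.ncard := rfl
  rcases Set.eq_empty_or_nonempty S with hSe | ⟨A₀, hA₀⟩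
  · rw [hCC, hSe, Set.ncard_empty]
    simp only [Nat.cast_zero]
    positivity
  · haveI hne : Nonempty (Fin n) := ⟨↑((Classical.choice hA₀).symm (Sum.inl 0))⟩
    set f : G.Subgraph → Fin n × Fin n × (Fin p → Fin n) × (Fin r → Fin n) := fun A =>
      if h : Nonempty (A.coe ≃g doubleStar p r) then
        (↑((Classical.choice h).symm (Sum.inl 0)), ↑((Classical.choice h).symm (Sum.inl 1)),
         fun i => ↑((Classical.choice h).symm (Sum.inr (Sum.inl i))),
         fun j => ↑((Classical.choice h).symm (Sum.inr (Sum.inr j))))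
      else Classical.arbitrary _ with hf
    set T : Finset (Fin n × Fin n × (Fin p → Fin n) × (Fin r → Fin n)) :=
      (Finset.univ.filter (fun w => G.degree w ≤ K)).biUnion (fun u =>
        ((G.neighborFinset u).filter (fun w => G.degree w ≤ K)).biUnion (fun v =>
          {u} ×ˢ {v} ×ˢ (Fintype.piFinset fun _ : Fin p => G.neighborFinset u) ×ˢ
            (Fintype.piFinset fun _ : Fin r => G.neighborFinset v))) with hT
    have hmem : ∀ A ∈ S, f A ∈ (↑T : Set _) := by
      intro A hA
      have hA' : Nonempty (A.coe ≃g doubleStar p r) := hA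
      obtain ⟨huv, hdu, hdv, hai, hbj⟩ := copy_facts hc hnr A (Classical.choice hA')
      simp only [hf, dif_pos hA']
      rw [Finset.mem_coe, hT, Finset.mem_biUnion]
      refine ⟨↑((Classical.choice hA').symm (Sum.inl 0)), by simp [hK, hdu], ?_⟩
      rw [Finset.mem_biUnion]
      refine ⟨↑((Classical.choice hA').symm (Sum.inl 1)),
        by simp [G.mem_neighborFinset, huv, hK, hdv], ?_⟩
      simp only [Finset.mem_product, Finset.mem_singleton, Fintype.mem_piFinset,
        G.mem_neighborFinset]
      exact ⟨trivial, trivial, hai, hbj⟩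
    have hinj : Set.InjOn f S := by
      intro A hA A' hA' heq
      have h1 : Nonempty (A.coe ≃g doubleStar p r) := hA
      have h2 : Nonempty (A'.coe ≃g doubleStar p r) := hA'
      simp only [hf, dif_pos h1, dif_pos h2, Prod.mk.injEq] at heq
      obtain ⟨e1, e2, e3, e4⟩ := heq
      have e3' := fun i => congrFun e3 i
      have e4' := fun j => congrFun e4 j
      apply SimpleGraph.Subgraph.ext
      · ext x
        rw [copy_verts_iff A (Classical.choice h1), copy_verts_iff A' (Classical.choice h2)]
        simp only [e1, e2, e3', e4']
      · funext x y
        apply propext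
        rw [copy_adj_iff A (Classical.choice h1), copy_adj_iff A' (Classical.choice h2)]
        simp only [e1, e2, e3', e4']
    have hle : S.ncard ≤ T.card := by
      have := Set.ncard_le_ncard_of_injOn f hmem hinj (Finset.finite_toSet T)
      rwa [Set.ncard_coe_finset] at this
    have hTcard : T.card ≤ n * K^(p+r+1) := by
      calc T.card ≤ ∑ u ∈ Finset.univ.filter (fun w => G.degree w ≤ K),
          (((G.neighborFinset u).filter (fun w => G.degree w ≤ K)).biUnion (fun v =>
            {u} ×ˢ {v} ×ˢ (Fintype.piFinset fun _ : Fin p => G.neighborFinset u) ×ˢ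
              (Fintype.piFinset fun _ : Fin r => G.neighborFinset v))).card :=
          Finset.card_biUnion_le
      _ ≤ ∑ u ∈ Finset.univ.filter (fun w => G.degree w ≤ K), K^(p+r+1) := by
          refine Finset.sum_le_sum ?_
          intro u hu
          rw [Finset.mem_filter] at hu
          calc (((G.neighborFinset u).filter (fun w => G.degree w ≤ K)).biUnion (fun v =>
              {u} ×ˢ {v} ×ˢ (Fintype.piFinset fun _ : Fin p => G.neighborFinset u) ×ˢ
                (Fintype.piFinset fun _ : Fin r => G.neighborFinset v))).card
              ≤ ∑ v ∈ (G.neighborFinset u).filter (fun w => G.degree w ≤ K),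
                ({u} ×ˢ {v} ×ˢ (Fintype.piFinset fun _ : Fin p => G.neighborFinset u) ×ˢ
                  (Fintype.piFinset fun _ : Fin r => G.neighborFinset v)).card :=
              Finset.card_biUnion_le
          _ ≤ ∑ v ∈ (G.neighborFinset u).filter (fun w => G.degree w ≤ K), K^p * K^r := by
              refine Finset.sum_le_sum ?_
              intro v hv
              rw [Finset.mem_filter] at hv
              have hXu : (Fintype.piFinset fun _ : Fin p => G.neighborFinset u).card ≤ K^p := by
                rw [Fintype.card_piFinset]
                calc ∏ _i : Fin p, (G.neighborFinset u).card
                    ≤ ∏ _i : Fin p, K := Finset.prod_le_prod (by simp) (by intro i _; exact hu.2)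
                _ = K^p := by rw [Finset.prod_const, Finset.card_univ, Fintype.card_fin]
              have hXv : (Fintype.piFinset fun _ : Fin r => G.neighborFinset v).card ≤ K^r := by
                rw [Fintype.card_piFinset]
                calc ∏ _j : Fin r, (G.neighborFinset v).card
                    ≤ ∏ _j : Fin r, K := Finset.prod_le_prod (by simp) (by intro j _; exact hv.2)
                _ = K^r := by rw [Finset.prod_const, Finset.card_univ, Fintype.card_fin]
              rw [Finset.card_product, Finset.card_product, Finset.card_product,
                Finset.card_singleton, Finset.card_singleton, one_mul, one_mul]
              exact Nat.mul_le_mul hXu hXv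
          _ = ((G.neighborFinset u).filter (fun w => G.degree w ≤ K)).card * (K^p * K^r) := by
              rw [Finset.sum_const, smul_eq_mul]
          _ ≤ K * (K^p * K^r) := by
              refine Nat.mul_le_mul_right _ ?_
              calc ((G.neighborFinset u).filter (fun w => G.degree w ≤ K)).card
                  ≤ (G.neighborFinset u).card := Finset.card_le_card (Finset.filter_subset _ _)
              _ ≤ K := hu.2
          _ = K^(p+r+1) := by rw [pow_add, pow_add, pow_one]; ring
      _ = (Finset.univ.filter (fun w => G.degree w ≤ K)).card * K^(p+r+1) := by
          rw [Finset.sum_const, smul_eq_mul]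
      _ ≤ n * K^(p+r+1) := by
          refine Nat.mul_le_mul_right _ ?_
          calc (Finset.univ.filter (fun w => G.degree w ≤ K)).card
              ≤ (Finset.univ : Finset (Fin n)).card := Finset.card_le_card (Finset.filter_subset _ _)
          _ = n := by rw [Finset.card_univ, Fintype.card_fin]
    have hfinal : _root_.copyCount G (doubleStar p r) ≤ n * K^(p+r+1) := by
      rw [hCC]; exact le_trans hle hTcard
    have : ((_root_.copyCount G (doubleStar p r) : ℕ) : ℝ) ≤ ((n * K^(p+r+1) : ℕ) : ℝ) :=
      Nat.cast_le.mpr hfinal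
    rw [hK] at this
    rw [hK]
    push_cast at this ⊢
    exact this.trans_eq (mul_comm _ _)
end

section
/- For every integer r ≥ 4 there exist a constant c > 0 and an integer n₀ such that for all n ≥ n₀ there is a simple graph G on n vertices together with a proper edge-coloring of G containing no rainbow copy of the complete graph K_r, such that G contains at least c·n^{r−2} copies of K_r. (Claim from the concluding remarks: ex(n, K_r, rainbow-K_r) = Ω(n^{r−2}).) -/
open SimpleGraph

namespace CRL


/-- matched-pair predicate on residues mod `r` -/
def mp (r i j : ℕ) : Prop :=
  (i % r = 0 ∧ j % r = 1) ∨ (i % r = 1 ∧ j % r = 0) ∨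
  (i % r = 2 ∧ j % r = 3) ∨ (i % r = 3 ∧ j % r = 2)

lemma mp_comm (r i j : ℕ) : mp r i j ↔ mp r j i := by unfold mp; tauto

instance (r i j : ℕ) : Decidable (mp r i j) := by unfold mp; infer_instance

/-- the graph -/
def MG (n r : ℕ) : SimpleGraph (Fin n) where
  Adj a b := a.val % r ≠ b.val % r ∧ a.val < r * (n / r) ∧ b.val < r * (n / r) ∧
    (mp r a.val b.val → a.val / r = b.val / r)
  symm := by
    constructor
    intro a b ⟨h1, h2, h3, h4⟩
    exact ⟨fun h => h1 h.symm, h3, h2, fun h => ((h4 ((mp_comm ..).mp h))).symm⟩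
  loopless := by constructor; intro a h; exact h.1 rfl

/-- the coloring -/
def colf (n r : ℕ) : Sym2 (Fin n) → ℕ :=
  Sym2.lift ⟨fun a b => if mp r a.val b.val then 0 else n * min a.val b.val + max a.val b.val + 1,
    by
      intro a b
      dsimp only
      by_cases h : mp r a.val b.val
      · rw [if_pos h, if_pos ((mp_comm ..).mp h)]
      · rw [if_neg h, if_neg (fun h' => h ((mp_comm ..).mp h')), Nat.min_comm, Nat.max_comm]⟩

lemma colf_mk (n r : ℕ) (a b : Fin n) :
    colf n r s(a, b) = if mp r a.val b.val then 0
      else n * min a.val b.val + max a.val b.val + 1 := rfl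

lemma edge_repr {n r : ℕ} {e : Sym2 (Fin n)} (he : e ∈ (MG n r).edgeSet) {v : Fin n}
    (hv : v ∈ e) : ∃ w, (MG n r).Adj v w ∧ e = s(v, w) := by
  induction e with
  | _ a b =>
    rw [mem_edgeSet] at he
    rcases Sym2.mem_iff.mp hv with h | h
    · exact ⟨b, h ▸ he, by rw [h]⟩
    · exact ⟨a, h ▸ he.symm, by rw [h, Sym2.eq_swap]⟩

lemma proper (n r : ℕ) : IsProperEdgeColoring (MG n r) (colf n r) := by
  intro e₁ he₁ e₂ he₂ hne ⟨v, hv₁, hv₂⟩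
  obtain ⟨a, ha, rfl⟩ := edge_repr he₁ hv₁
  obtain ⟨b, hb, rfl⟩ := edge_repr he₂ hv₂
  have hab : a ≠ b := fun h => hne (by rw [h])
  have hn : 0 < n := v.pos
  rw [colf_mk, colf_mk]
  by_cases h1 : mp r v.val a.val <;> by_cases h2 : mp r v.val b.val
  · -- both matched: forces a = b
    exfalso
    have hda := ha.2.2.2 h1
    have hdb := hb.2.2.2 h2
    have hmab : a.val % r = b.val % r := by
      rcases h1 with ⟨p, q⟩ | ⟨p, q⟩ | ⟨p, q⟩ | ⟨p, q⟩ <;>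
        rcases h2 with ⟨p', q'⟩ | ⟨p', q'⟩ | ⟨p', q'⟩ | ⟨p', q'⟩ <;> omega
    have hr : 0 < r := by
      by_contra h
      have : r = 0 := by omega
      subst this
      simp [mp] at h1
      omega
    apply hab
    apply Fin.ext
    have ea := Nat.div_add_mod a.val r
    have eb := Nat.div_add_mod b.val r
    have hd : a.val / r = b.val / r := hda.symm.trans hdb
    have h' : r * (a.val / r) = r * (b.val / r) := by rw [hd]
    omega
  · rw [if_pos h1, if_neg h2]; omega
  · rw [if_neg h1, if_pos h2]; omega
  · rw [if_neg h1, if_neg h2]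
    intro h
    have hmax1 : max v.val a.val < n := by have := v.isLt; have := a.isLt; omega
    have hmax2 : max v.val b.val < n := by have := v.isLt; have := b.isLt; omega
    have h0 : n * min v.val a.val + max v.val a.val =
        n * min v.val b.val + max v.val b.val := by omega
    have hq := congrArg (· % n) h0
    simp only [Nat.mul_add_mod] at hq
    rw [Nat.mod_eq_of_lt hmax1, Nat.mod_eq_of_lt hmax2] at hq
    have hmin : min v.val a.val = min v.val b.val := by
      have h' : n * min v.val a.val = n * min v.val b.val := by omega
      exact Nat.eq_of_mul_eq_mul_left hn h'
    have : (v.val = v.val ∧ a.val = b.val) ∨ (v.val = b.val ∧ a.val = v.val) := by omega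
    rcases this with ⟨-, h'⟩ | ⟨h', h''⟩
    · exact hab (Fin.ext h')
    · -- v = b and a = v: then a = b
      exact hab (Fin.ext (by omega))

lemma no_rainbow (n r : ℕ) (hr : 4 ≤ r) :
    ¬ HasRainbowCopy (MG n r) (colf n r) (⊤ : SimpleGraph (Fin r)) := by
  rintro ⟨A, ⟨φ⟩, hinj⟩
  have hr0 : 0 < r := by omega
  -- all distinct vertices of A are adjacent
  have hpair : ∀ x y : ↥A.verts, x ≠ y → A.Adj ↑x ↑y := by
    intro x y hxy
    have := φ.map_rel_iff (a := x) (b := y)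
    rw [top_adj] at this
    exact this.mp (fun h => hxy (φ.injective h))
  -- the residue map
  have hFin : Finite ↥A.verts := Finite.of_equiv _ φ.toEquiv.symm
  set ρ : ↥A.verts → Fin r := fun x => ⟨(x : Fin n).val % r, Nat.mod_lt _ hr0⟩ with hρ
  have hρinj : Function.Injective ρ := by
    intro x y h
    by_contra hxy
    exact absurd (congrArg Fin.val h) (A.adj_sub (hpair x y hxy)).1
  have hρsurj : Function.Surjective ρ := by
    have : Function.Injective (ρ ∘ φ.toEquiv.symm) := hρinj.comp φ.toEquiv.symm.injective
    have hs := Finite.injective_iff_surjective.mp this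
    intro i
    obtain ⟨j, hj⟩ := hs i
    exact ⟨φ.toEquiv.symm j, hj⟩
  obtain ⟨x0, hx0⟩ := hρsurj ⟨0, by omega⟩
  obtain ⟨x1, hx1⟩ := hρsurj ⟨1, by omega⟩
  obtain ⟨x2, hx2⟩ := hρsurj ⟨2, by omega⟩
  obtain ⟨x3, hx3⟩ := hρsurj ⟨3, by omega⟩
  have m0 : (x0 : Fin n).val % r = 0 := congrArg Fin.val hx0
  have m1 : (x1 : Fin n).val % r = 1 := congrArg Fin.val hx1
  have m2 : (x2 : Fin n).val % r = 2 := congrArg Fin.val hx2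
  have m3 : (x3 : Fin n).val % r = 3 := congrArg Fin.val hx3
  have e01 : s((x0 : Fin n), (x1 : Fin n)) ∈ A.edgeSet := by
    rw [Subgraph.mem_edgeSet]
    exact hpair x0 x1 (fun h => by rw [h] at m0; omega)
  have e23 : s((x2 : Fin n), (x3 : Fin n)) ∈ A.edgeSet := by
    rw [Subgraph.mem_edgeSet]
    exact hpair x2 x3 (fun h => by rw [h] at m2; omega)
  have c01 : colf n r s((x0 : Fin n), (x1 : Fin n)) = 0 := by
    rw [colf_mk, if_pos]; left; exact ⟨m0, m1⟩
  have c23 : colf n r s((x2 : Fin n), (x3 : Fin n)) = 0 := by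
    rw [colf_mk, if_pos]; right; right; left; exact ⟨m2, m3⟩
  have := hinj e01 e23 (by rw [c01, c23])
  rw [Sym2.eq_iff] at this
  rcases this with ⟨h, -⟩ | ⟨h, -⟩
  · rw [h] at m0; omega
  · rw [h] at m0; omega


instance subgraphFinite {V : Type*} [Finite V] {G : SimpleGraph V} : Finite G.Subgraph :=
  Finite.of_injective (fun A => (A.verts, A.Adj)) (by
    intro A B h
    rw [Prod.mk.injEq] at h
    exact Subgraph.ext h.1 h.2)

variable (n r : ℕ)

/-- which coordinate of `t` part `i` uses -/
def pp (r : ℕ) (hr : 4 ≤ r) (i : Fin r) : Fin (r - 2) :=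
  ⟨if i.val ≤ 1 then 0 else if i.val ≤ 3 then 1 else i.val - 2, by
    have := i.isLt; split_ifs <;> omega⟩

lemma pp_val (hr : 4 ≤ r) (i : Fin r) :
    (pp r hr i).val = if i.val ≤ 1 then 0 else if i.val ≤ 3 then 1 else i.val - 2 := rfl

/-- the clique vertices -/
def vt (hr : 4 ≤ r) (hn : r ≤ n) (t : Fin (r - 2) → Fin (n / r)) (i : Fin r) : Fin n :=
  ⟨r * (t (pp r hr i)).val + i.val, by
    have h1 : (t (pp r hr i)).val + 1 ≤ n / r := (t _).isLt
    have h2 : r * ((t (pp r hr i)).val + 1) ≤ r * (n / r) := Nat.mul_le_mul_left r h1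
    rw [Nat.mul_add, Nat.mul_one] at h2
    have h3 : r * (n / r) ≤ n := by
      calc r * (n / r) = n / r * r := Nat.mul_comm ..
      _ ≤ n := Nat.div_mul_le_self n r
    have := i.isLt
    omega⟩

lemma vt_mod (hr : 4 ≤ r) (hn : r ≤ n) (t : Fin (r - 2) → Fin (n / r)) (i : Fin r) :
    (vt n r hr hn t i).val % r = i.val := by
  show (r * (t (pp r hr i)).val + i.val) % r = i.val
  rw [Nat.mul_add_mod, Nat.mod_eq_of_lt i.isLt]

lemma vt_div (hr : 4 ≤ r) (hn : r ≤ n) (t : Fin (r - 2) → Fin (n / r)) (i : Fin r) :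
    (vt n r hr hn t i).val / r = (t (pp r hr i)).val := by
  show (r * (t (pp r hr i)).val + i.val) / r = (t (pp r hr i)).val
  rw [Nat.mul_add_div (by omega), Nat.div_eq_of_lt i.isLt, Nat.add_zero]

lemma vt_inj (hr : 4 ≤ r) (hn : r ≤ n) (t : Fin (r - 2) → Fin (n / r)) :
    Function.Injective (vt n r hr hn t) := by
  intro i j h
  have := vt_mod n r hr hn t i
  rw [h, vt_mod] at this
  exact Fin.ext this.symm

lemma vt_adj (hr : 4 ≤ r) (hn : r ≤ n) (t : Fin (r - 2) → Fin (n / r)) (i j : Fin r)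
    (hij : i ≠ j) : (MG n r).Adj (vt n r hr hn t i) (vt n r hr hn t j) := by
  have hlt : ∀ k : Fin r, (vt n r hr hn t k).val < r * (n / r) := by
    intro k
    show r * (t (pp r hr k)).val + k.val < r * (n / r)
    have h1 : (t (pp r hr k)).val + 1 ≤ n / r := (t _).isLt
    have h2 : r * ((t (pp r hr k)).val + 1) ≤ r * (n / r) := Nat.mul_le_mul_left r h1
    rw [Nat.mul_add, Nat.mul_one] at h2
    have := k.isLt
    omega
  refine ⟨?_, hlt i, hlt j, ?_⟩
  · rw [vt_mod, vt_mod]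
    exact fun h => hij (Fin.ext h)
  · intro hmp
    rw [vt_div, vt_div]
    have hpp : pp r hr i = pp r hr j := by
      rcases hmp with ⟨h1, h2⟩ | ⟨h1, h2⟩ | ⟨h1, h2⟩ | ⟨h1, h2⟩ <;>
      · rw [vt_mod] at h1
        rw [vt_mod] at h2
        apply Fin.ext
        show (if _ then _ else _) = (if _ then _ else _)
        split_ifs <;> omega
    rw [hpp]

/-- the clique subgraphs -/
def FS (hr : 4 ≤ r) (hn : r ≤ n) (t : Fin (r - 2) → Fin (n / r)) : (MG n r).Subgraph where
  verts := Set.range (vt n r hr hn t)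
  Adj a b := a ∈ Set.range (vt n r hr hn t) ∧ b ∈ Set.range (vt n r hr hn t) ∧ (MG n r).Adj a b
  adj_sub h := h.2.2
  edge_vert h := h.1
  symm := by constructor; intro a b h; exact ⟨h.2.1, h.1, h.2.2.symm⟩

lemma FS_iso (hr : 4 ≤ r) (hn : r ≤ n) (t : Fin (r - 2) → Fin (n / r)) :
    Nonempty ((FS n r hr hn t).coe ≃g (⊤ : SimpleGraph (Fin r))) := by
  have hbij : Function.Bijective
      (fun i : Fin r => (⟨vt n r hr hn t i, ⟨i, rfl⟩⟩ : ↥(FS n r hr hn t).verts)) := by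
    constructor
    · intro i j h
      exact vt_inj n r hr hn t (congrArg Subtype.val h)
    · rintro ⟨x, i, rfl⟩
      exact ⟨i, rfl⟩
  refine ⟨(SimpleGraph.Iso.symm ⟨Equiv.ofBijective _ hbij, ?_⟩)⟩
  intro a b
  show (FS n r hr hn t).Adj (vt n r hr hn t a) (vt n r hr hn t b) ↔ a ≠ b
  constructor
  · intro h hab
    exact (h.2.2.1) (by rw [hab])
  · intro hab
    exact ⟨⟨a, rfl⟩, ⟨b, rfl⟩, vt_adj n r hr hn t a b hab⟩

lemma FS_inj (hr : 4 ≤ r) (hn : r ≤ n) : Function.Injective (FS n r hr hn) := by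
  intro t t' h
  have hv : Set.range (vt n r hr hn t) = Set.range (vt n r hr hn t') :=
    congrArg Subgraph.verts h
  have key : ∀ i : Fin r, (t (pp r hr i)).val = (t' (pp r hr i)).val := by
    intro i
    have : vt n r hr hn t i ∈ Set.range (vt n r hr hn t') := by
      rw [← hv]; exact ⟨i, rfl⟩
    obtain ⟨j, hj⟩ := this
    have hmod : j.val = i.val := by
      have := vt_mod n r hr hn t' j
      rw [hj, vt_mod] at this
      exact this.symm
    have hji : j = i := Fin.ext hmod
    subst hji
    have hval := congrArg Fin.val hj
    have : r * (t' (pp r hr j)).val + j.val = r * (t (pp r hr j)).val + j.val := hval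
    have h4 : 0 < r := by omega
    have := Nat.eq_of_mul_eq_mul_left h4 (show r * (t' (pp r hr j)).val = r * (t (pp r hr j)).val by omega)
    omega
  funext j
  have hj2 : j.val < r - 2 := j.isLt
  apply Fin.ext
  rcases Nat.lt_or_ge j.val 2 with hj | hj
  · rcases Nat.lt_or_ge j.val 1 with hj0 | hj1
    · have h0 : pp r hr ⟨0, by omega⟩ = j := by
        apply Fin.ext; rw [pp_val]; simp only [Fin.val_mk]; split_ifs <;> omega
      have := key ⟨0, by omega⟩
      rw [h0] at this
      exact this
    · have h0 : pp r hr ⟨2, by omega⟩ = j := by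
        apply Fin.ext; rw [pp_val]; simp only [Fin.val_mk]; split_ifs <;> omega
      have := key ⟨2, by omega⟩
      rw [h0] at this
      exact this
  · have h0 : pp r hr ⟨j.val + 2, by omega⟩ = j := by
      apply Fin.ext; rw [pp_val]; simp only [Fin.val_mk]; split_ifs <;> omega
    have := key ⟨j.val + 2, by omega⟩
    rw [h0] at this
    exact this

lemma count_lower (hr : 4 ≤ r) (hn : r ≤ n) :
    (n / r) ^ (r - 2) ≤ _root_.copyCount (MG n r) (⊤ : SimpleGraph (Fin r)) := by
  have hsub : Set.range (FS n r hr hn) ⊆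
      {A : (MG n r).Subgraph | Nonempty (A.coe ≃g (⊤ : SimpleGraph (Fin r)))} := by
    rintro A ⟨t, rfl⟩
    exact FS_iso n r hr hn t
  have h1 : (Set.range (FS n r hr hn)).ncard ≤
      _root_.copyCount (MG n r) (⊤ : SimpleGraph (Fin r)) :=
    Set.ncard_le_ncard hsub (Set.toFinite _)
  have h2 : (Set.range (FS n r hr hn)).ncard = (n / r) ^ (r - 2) := by
    rw [← Nat.card_coe_set_eq, Nat.card_range_of_injective (FS_inj n r hr hn)]
    simp [Nat.card_eq_fintype_card]
  omega

end CRL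

/-- Claim from the concluding remarks: ex(n, K_r, rainbow-K_r) = Ω(n^{r-2}). -/
theorem clique_rainbow_lower (r : ℕ) (hr : 4 ≤ r) :
    ∃ c : ℝ, 0 < c ∧ ∃ n₀ : ℕ, ∀ n ≥ n₀,
      ∃ (G : SimpleGraph (Fin n)) (col : Sym2 (Fin n) → ℕ),
        IsProperEdgeColoring G col ∧
        ¬ HasRainbowCopy G col (⊤ : SimpleGraph (Fin r)) ∧
        c * (n : ℝ) ^ (r - 2) ≤ (_root_.copyCount G (⊤ : SimpleGraph (Fin r)) : ℝ) := by
  have hrR : (0 : ℝ) < r := by exact_mod_cast (by omega : 0 < r)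
  refine ⟨1 / (2 * (r : ℝ)) ^ (r - 2), by positivity, 2 * r, fun n hn => ?_⟩
  have hrn : r ≤ n := by omega
  refine ⟨CRL.MG n r, CRL.colf n r, CRL.proper n r, CRL.no_rainbow n r hr, ?_⟩
  have key := CRL.count_lower n r hr hrn
  set m := n / r with hm
  have hnat : n ≤ 2 * (r * m) := by
    have hd := Nat.div_add_mod n r
    rw [← hm] at hd
    have hmod : n % r < r := Nat.mod_lt _ (by omega)
    have hq : 2 ≤ m := (Nat.le_div_iff_mul_le (by omega)).mpr (by omega)
    have h1 : r * 2 ≤ r * m := Nat.mul_le_mul_left r hq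
    omega
  have hcast : (n : ℝ) / (2 * (r : ℝ)) ≤ (m : ℝ) := by
    rw [div_le_iff₀ (by positivity)]
    have h2 : (n : ℝ) ≤ 2 * ((r : ℝ) * (m : ℝ)) := by exact_mod_cast hnat
    linarith
  calc (1 / (2 * (r : ℝ)) ^ (r - 2)) * (n : ℝ) ^ (r - 2)
      = ((n : ℝ) / (2 * (r : ℝ))) ^ (r - 2) := by rw [div_pow]; ring
    _ ≤ (m : ℝ) ^ (r - 2) := pow_le_pow_left₀ (by positivity) hcast _
    _ = ((m ^ (r - 2) : ℕ) : ℝ) := by push_cast; ring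
    _ ≤ _ := Nat.cast_le.mpr key
end
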